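/- arXiv:1411.4444 — 2 statements merged into one kernel-verified Lean document; each statement's English description precedes it below -/
import Mathlib

section
/- (1) For any minimum-cost feasible multiflow f in N, the function x : E → ℝ defined by x(e) := f(e) is an optimal solution of the linear program (L). (2) For any optimal solution x of (L), there exists a feasible multiflow f in N with f(e) ≤ x(e) for all e ∈ E, and any such multiflow is a minimum-cost feasible multiflow. In particular, the minimum cost of a feasible multiflow equals the optimal value of (L). -/
open SimpleGraph Finset

/-- A multiflow in the network `(V, G, S, c)`: a finite family of `S`-paths
(paths connecting two distinct terminals of `S`) with nonnegative flow values,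
obeying the edge capacities `c`. -/
structure Multiflow {V : Type*} [DecidableEq V] (G : SimpleGraph V) (S : Finset V)
    (c : Sym2 V → ℝ) where
  N : ℕ
  src : Fin N → V
  dst : Fin N → V
  walk : (p : Fin N) → G.Walk (src p) (dst p)
  isPath : ∀ p, (walk p).IsPath
  srcS : ∀ p, src p ∈ S
  dstS : ∀ p, dst p ∈ S
  srcdst : ∀ p, src p ≠ dst p
  lam : Fin N → ℝ
  lam_nonneg : ∀ p, 0 ≤ lam p
  cap : ∀ e ∈ G.edgeSet, (∑ p, if e ∈ (walk p).edges then lam p else 0) ≤ c e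

namespace Multiflow

variable {V : Type*} [DecidableEq V] {G : SimpleGraph V} {S : Finset V} {c : Sym2 V → ℝ}

/-- The total flow `f(e)` through an edge `e`. -/
def flowOn (M : Multiflow G S c) (e : Sym2 V) : ℝ :=
  ∑ p, if e ∈ (M.walk p).edges then M.lam p else 0

/-- The total flow value `f(s)` of the paths having `s` as an endpoint. -/
def termVal (M : Multiflow G S c) (s : V) : ℝ :=
  ∑ p, if M.src p = s ∨ M.dst p = s then M.lam p else 0

/-- Feasibility of a multiflow with respect to the demands `r`: `f(s) ≥ r(s)`. -/
def Feasible (M : Multiflow G S c) (r : V → ℝ) : Prop :=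
  ∀ s ∈ S, r s ≤ M.termVal s

/-- The total cost `a_f = Σ_e a(e) f(e)` of a multiflow. -/
noncomputable def cost [Fintype V] [DecidableRel G.Adj]
    (M : Multiflow G S c) (a : Sym2 V → ℝ) : ℝ :=
  ∑ e ∈ G.edgeFinset, a e * M.flowOn e

end Multiflow

open Classical in
/-- The capacity `c(δX)` of the cut `δX`. -/
noncomputable def cutCap {V : Type*} [Fintype V] [DecidableEq V]
    (G : SimpleGraph V) [DecidableRel G.Adj] (c : Sym2 V → ℝ) (X : Finset V) : ℝ :=
  ∑ e ∈ G.edgeFinset,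
    if Sym2.lift ⟨fun i j => ((i ∈ X ∧ j ∉ X) ∨ (j ∈ X ∧ i ∉ X) : Prop),
        fun i j => propext (by tauto)⟩ e then c e else 0

/-- Feasibility for the cut-covering linear program (L):
`0 ≤ x(e) ≤ c(e)` for all edges and `x(δX) ≥ r(s)` for all `s ∈ S`, `X ∈ 𝒞_s`. -/
def LPFeasible {V : Type*} [Fintype V] [DecidableEq V]
    (G : SimpleGraph V) [DecidableRel G.Adj] (S : Finset V)
    (c : Sym2 V → ℝ) (r : V → ℝ) (x : Sym2 V → ℝ) : Prop :=
  (∀ e ∈ G.edgeSet, 0 ≤ x e ∧ x e ≤ c e) ∧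
  ∀ s ∈ S, ∀ X : Finset V, s ∈ X → (∀ t ∈ S, t ∈ X → t = s) → r s ≤ cutCap G x X

/-- The objective `Σ_{e ∈ E} a(e)·x(e)` of the linear program (L). -/
noncomputable def LPCost {V : Type*} [Fintype V] [DecidableEq V]
    (G : SimpleGraph V) [DecidableRel G.Adj] (a : Sym2 V → ℝ) (x : Sym2 V → ℝ) : ℝ :=
  ∑ e ∈ G.edgeFinset, a e * x e



set_option linter.unusedSectionVars false
set_option maxHeartbeats 1000000

noncomputable section


def dotp {m : Type*} [Fintype m] (x y : m → ℝ) : ℝ := ∑ j, x j * y j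

lemma dotp_self_pos {m : Type*} [Fintype m] {b : m → ℝ} (hb : b ≠ 0) : 0 < dotp b b := by
  have h : ∃ j, b j ≠ 0 := by
    by_contra h; push_neg at h; exact hb (funext h)
  obtain ⟨j, hj⟩ := h
  exact Finset.sum_pos' (fun k _ => mul_self_nonneg _)
    ⟨j, mem_univ j, mul_pos_of_ne_zero hj⟩
where
  mul_pos_of_ne_zero {x : ℝ} (hx : x ≠ 0) : 0 < x * x := mul_self_pos.2 hx

lemma dotp_sum_left {m ι : Type*} [Fintype m] (s : Finset ι) (f : ι → m → ℝ) (y : m → ℝ) :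
    dotp (∑ i ∈ s, f i) y = ∑ i ∈ s, dotp (f i) y := by
  unfold dotp
  rw [Finset.sum_comm]
  congr 1; ext j; simp [Finset.sum_apply, Finset.sum_mul]

lemma dotp_smul_left {m : Type*} [Fintype m] (c : ℝ) (x y : m → ℝ) :
    dotp (c • x) y = c * dotp x y := by
  unfold dotp
  rw [Finset.mul_sum]; congr 1; ext j; simp [mul_assoc]

lemma dotp_sub_left {m : Type*} [Fintype m] (x x' y : m → ℝ) :
    dotp (x - x') y = dotp x y - dotp x' y := by
  unfold dotp
  rw [← Finset.sum_sub_distrib]; congr 1; ext j; simp [sub_mul]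

lemma dotp_sub_right {m : Type*} [Fintype m] (x y y' : m → ℝ) :
    dotp x (y - y') = dotp x y - dotp x y' := by
  unfold dotp
  rw [← Finset.sum_sub_distrib]; congr 1; ext j; simp [mul_sub]

lemma dotp_smul_right {m : Type*} [Fintype m] (c : ℝ) (x y : m → ℝ) :
    dotp x (c • y) = c * dotp x y := by
  unfold dotp
  rw [Finset.mul_sum]; congr 1; ext j; simp; ring

lemma farkas_fin {m : Type*} [Fintype m] :
    ∀ (n : ℕ) (v : Fin n → m → ℝ) (b : m → ℝ),
    (∃ lam : Fin n → ℝ, (∀ i, 0 ≤ lam i) ∧ b = ∑ i, lam i • v i) ∨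
    (∃ y : m → ℝ, (∀ i, 0 ≤ dotp (v i) y) ∧ dotp b y < 0) := by
  intro n
  induction n with
  | zero =>
    intro v b
    by_cases hb : b = 0
    · exact Or.inl ⟨0, fun i => le_refl _, by simp [hb]⟩
    · refine Or.inr ⟨-b, fun i => i.elim0, ?_⟩
      have h := dotp_self_pos hb
      have : dotp b (-b) = -dotp b b := by
        unfold dotp; rw [← Finset.sum_neg_distrib]; congr 1; ext j; simp
      rw [this]; linarith
  | succ n ih =>
    intro v b
    -- first apply IH to the tail family
    rcases ih (fun i => v i.succ) b with ⟨lam, hlam, hb⟩ | ⟨y, hy, hby⟩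
    · -- b in cone of tail
      refine Or.inl ⟨Fin.cons 0 lam, ?_, ?_⟩
      · intro i
        refine Fin.cases ?_ ?_ i
        · simp
        · intro j; simpa using hlam j
      · rw [Fin.sum_univ_succ, hb]; simp
    · by_cases h0 : 0 ≤ dotp (v 0) y
      · exact Or.inr ⟨y, fun i => Fin.cases h0 (fun j => hy j) i, hby⟩
      push_neg at h0
      -- project onto hyperplane orthogonal-ish
      set d := dotp (v 0) y with hd
      have hdne : d ≠ 0 := ne_of_lt h0
      set v' : Fin n → m → ℝ := fun i => v i.succ - (dotp (v i.succ) y / d) • v 0 with hv'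
      set b' : m → ℝ := b - (dotp b y / d) • v 0 with hb'
      rcases ih v' b' with ⟨lam, hlam, hbeq⟩ | ⟨y', hy', hby'⟩
      · -- reconstruct cone membership
        set mu : ℝ := (dotp b y - ∑ i, lam i * dotp (v i.succ) y) / d with hmu
        have hmu_pos : 0 ≤ mu := by
          have hnum : dotp b y - ∑ i, lam i * dotp (v i.succ) y < 0 := by
            have : 0 ≤ ∑ i, lam i * dotp (v i.succ) y :=
              Finset.sum_nonneg (fun i _ => mul_nonneg (hlam i) (hy i))
            linarith
          exact le_of_lt (div_pos_of_neg_of_neg hnum h0)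
        refine Or.inl ⟨Fin.cons mu lam, ?_, ?_⟩
        · intro i
          refine Fin.cases ?_ ?_ i
          · exact hmu_pos
          · intro j; simpa using hlam j
        · rw [Fin.sum_univ_succ]
          simp only [Fin.cons_zero, Fin.cons_succ]
          have : b = b' + (dotp b y / d) • v 0 := by rw [hb']; ring_nf
          rw [this, hbeq, hv']
          simp only [smul_sub]
          rw [Finset.sum_sub_distrib, hmu]
          have : ∑ i, lam i • ((dotp (v i.succ) y / d) • v 0)
              = ((∑ i, lam i * dotp (v i.succ) y) / d) • v 0 := by
            rw [Finset.sum_div, Finset.sum_smul]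
            congr 1; ext i
            rw [smul_smul, mul_div_assoc]
          rw [this, sub_div, sub_smul]
          abel
      · -- reconstruct dual vector
        set y'' : m → ℝ := y' - (dotp (v 0) y' / d) • y with hy''
        have key : ∀ w : m → ℝ, dotp w y'' = dotp (w - (dotp w y / d) • v 0) y' := by
          intro w
          rw [hy'', dotp_sub_right, dotp_smul_right, dotp_sub_left, dotp_smul_left]
          have h1 : dotp (v 0) y' = dotp y' (v 0) := by
            unfold dotp; congr 1; ext j; ring
          have h2 : dotp w y = dotp y w := by
            unfold dotp; congr 1; ext j; ring
          ring_nf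
        refine Or.inr ⟨y'', ?_, ?_⟩
        · intro i
          refine Fin.cases ?_ ?_ i
          · rw [key (v 0)]
            have : v 0 - (dotp (v 0) y / d) • v 0 = 0 := by
              rw [hd]; rw [div_self hdne]; simp
            rw [this]
            simp [dotp]
          · intro j
            rw [key (v j.succ)]
            exact hy' j
        · rw [key b]; exact hby'

lemma farkas_cone {ι m : Type*} [Fintype ι] [DecidableEq ι] [Fintype m] (v : ι → m → ℝ) (b : m → ℝ) :
    (∃ lam : ι → ℝ, (∀ i, 0 ≤ lam i) ∧ b = ∑ i, lam i • v i) ∨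
    (∃ y : m → ℝ, (∀ i, 0 ≤ dotp (v i) y) ∧ dotp b y < 0) := by
  obtain ⟨e⟩ := Fintype.truncEquivFin ι
  rcases farkas_fin (Fintype.card ι) (fun i => v (e.symm i)) b with ⟨lam, h1, h2⟩ | ⟨y, h1, h2⟩
  · refine Or.inl ⟨fun i => lam (e i), fun i => h1 _, ?_⟩
    rw [h2, ← e.symm.sum_comp]
    simp
  · exact Or.inr ⟨y, fun i => by simpa using h1 (e i), h2⟩

/-- Farkas' lemma, inequality form: either `∃ λ ≥ 0, A λ ≤ b`, or there is a nonnegative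
dual vector `y` with `yᵀA ≥ 0` and `yᵀb < 0`. -/
lemma farkas_ineq {m n : Type*} [Fintype m] [Fintype n] (A : m → n → ℝ) (b : m → ℝ) :
    (∃ lam : n → ℝ, (∀ j, 0 ≤ lam j) ∧ ∀ i, (∑ j, A i j * lam j) ≤ b i) ∨
    (∃ y : m → ℝ, (∀ i, 0 ≤ y i) ∧ (∀ j, 0 ≤ ∑ i, y i * A i j) ∧ (∑ i, y i * b i) < 0) := by
  classical
  set v : n ⊕ m → m → ℝ := Sum.elim (fun j => fun i => A i j) (fun i' => Pi.single i' 1) with hv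
  rcases farkas_cone v b with ⟨lam, h1, h2⟩ | ⟨y, h1, h2⟩
  · refine Or.inl ⟨fun j => lam (Sum.inl j), fun j => h1 _, fun i => ?_⟩
    have := congrFun h2 i
    rw [Fintype.sum_sum_type] at this
    simp only [hv, Sum.elim_inl, Sum.elim_inr] at this
    rw [Pi.add_apply, Finset.sum_apply, Finset.sum_apply] at this
    simp only [Pi.smul_apply, smul_eq_mul] at this
    have hslack : 0 ≤ ∑ i' : m, lam (Sum.inr i') * (Pi.single i' 1 : m → ℝ) i := by
      refine Finset.sum_nonneg fun i' _ => mul_nonneg (h1 _) ?_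
      by_cases h : i' = i <;> simp [Pi.single_apply, h]
    calc ∑ j, A i j * lam (Sum.inl j) = ∑ j, lam (Sum.inl j) * A i j := by
          congr 1; ext j; ring
      _ ≤ b i := by rw [this]; linarith
  · refine Or.inr ⟨y, ?_, ?_, ?_⟩
    · intro i
      have := h1 (Sum.inr i)
      simpa [hv, dotp, Pi.single_apply] using this
    · intro j
      have := h1 (Sum.inl j)
      simpa [hv, dotp, mul_comm] using this
    · simpa [dotp, mul_comm] using h2

variable {V : Type*} [DecidableEq V] {G : SimpleGraph V}

/-- y-length of a walk -/
def wlen (y : Sym2 V → ℝ) {u v : V} (p : G.Walk u v) : ℝ := (p.edges.map y).sum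

lemma wlen_nonneg {y : Sym2 V → ℝ} (hy : ∀ e, 0 ≤ y e) {u v : V} (p : G.Walk u v) :
    0 ≤ wlen y p := by
  apply List.sum_nonneg
  intro a ha
  obtain ⟨e, _, rfl⟩ := List.mem_map.1 ha
  exact hy e

lemma sum_toFinset_le_map_sum {α : Type*} [DecidableEq α] (f : α → ℝ) (hf : ∀ a, 0 ≤ f a) :
    ∀ (l : List α), ∑ a ∈ l.toFinset, f a ≤ (l.map f).sum := by
  intro l
  induction l with
  | nil => simp
  | cons a l ih =>
    rw [List.toFinset_cons, List.map_cons, List.sum_cons]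
    by_cases h : a ∈ l.toFinset
    · rw [Finset.insert_eq_self.2 h]
      linarith [hf a]
    · rw [Finset.sum_insert h]
      linarith

lemma wlen_le_of_subset_nodup {y : Sym2 V → ℝ} (hy : ∀ e, 0 ≤ y e)
    {u v u' v' : V} {p : G.Walk u v} {q : G.Walk u' v'}
    (hnd : p.edges.Nodup) (hsub : p.edges ⊆ q.edges) : wlen y p ≤ wlen y q := by
  unfold wlen
  have h1 : (p.edges.map y).sum = ∑ e ∈ p.edges.toFinset, y e := by
    rw [List.sum_toFinset _ hnd]
  rw [h1]
  calc ∑ e ∈ p.edges.toFinset, y e ≤ ∑ e ∈ q.edges.toFinset, y e := by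
        apply Finset.sum_le_sum_of_subset_of_nonneg
        · intro e he
          rw [List.mem_toFinset] at he ⊢
          exact hsub he
        · intro e _ _
          exact hy e
    _ ≤ (q.edges.map y).sum := sum_toFinset_le_map_sum y hy _

lemma wlen_bypass_le {y : Sym2 V → ℝ} (hy : ∀ e, 0 ≤ y e) {u v : V} (p : G.Walk u v) :
    wlen y p.bypass ≤ wlen y p :=
  wlen_le_of_subset_nodup hy p.bypass_isPath.edges_nodup p.edges_bypass_subset

lemma wlen_append {y : Sym2 V → ℝ} {u v w : V} (p : G.Walk u v) (q : G.Walk v w) :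
    wlen y (p.append q) = wlen y p + wlen y q := by
  unfold wlen
  rw [SimpleGraph.Walk.edges_append, List.map_append, List.sum_append]

lemma wlen_reverse {y : Sym2 V → ℝ} {u v : V} (p : G.Walk u v) :
    wlen y p.reverse = wlen y p := by
  unfold wlen
  rw [SimpleGraph.Walk.edges_reverse, List.map_reverse, List.sum_reverse]

lemma wlen_concat {y : Sym2 V → ℝ} {u v w : V} (p : G.Walk u v) (h : G.Adj v w) :
    wlen y (p.concat h) = wlen y p + y s(v, w) := by
  unfold wlen
  rw [SimpleGraph.Walk.edges_concat, List.map_concat, List.sum_concat]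

lemma wlen_nil {y : Sym2 V → ℝ} {u : V} : wlen y (SimpleGraph.Walk.nil : G.Walk u u) = 0 := by
  simp [wlen]

section Phi
variable [Fintype V] [DecidableRel G.Adj]

def phi (y : Sym2 V → ℝ) (Z : ℝ) (s v : V) : ℝ :=
  (insert Z ((univ : Finset (G.Path s v)).image (fun p => wlen y p.1))).min'
    (Finset.insert_nonempty _ _)

variable {y : Sym2 V → ℝ} {Z : ℝ} {s : V}

lemma phi_le_Z (v : V) : phi (G := G) y Z s v ≤ Z :=
  Finset.min'_le _ _ (Finset.mem_insert_self _ _)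

lemma phi_le_wlen (v : V) (p : G.Path s v) : phi (G := G) y Z s v ≤ wlen y p.1 :=
  Finset.min'_le _ _ (Finset.mem_insert_of_mem (Finset.mem_image_of_mem _ (mem_univ p)))

lemma phi_nonneg (hy : ∀ e, 0 ≤ y e) (hZ : 0 ≤ Z) (v : V) : 0 ≤ phi (G := G) y Z s v := by
  apply Finset.le_min'
  intro b hb
  rcases Finset.mem_insert.1 hb with rfl | hb
  · exact hZ
  · obtain ⟨p, _, rfl⟩ := Finset.mem_image.1 hb
    exact wlen_nonneg hy _

lemma phi_self (hy : ∀ e, 0 ≤ y e) (hZ : 0 ≤ Z) : phi (G := G) y Z s s = 0 := by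
  refine le_antisymm ?_ (phi_nonneg hy hZ s)
  have := phi_le_wlen (G := G) (y := y) (Z := Z) s ⟨SimpleGraph.Walk.nil, SimpleGraph.Walk.IsPath.nil⟩
  rwa [wlen_nil] at this

lemma phi_attain (v : V) : phi (G := G) y Z s v = Z ∨ ∃ p : G.Path s v, phi (G := G) y Z s v = wlen y p.1 := by
  have := Finset.min'_mem (insert Z ((univ : Finset (G.Path s v)).image (fun p => wlen y p.1)))
    (Finset.insert_nonempty _ _)
  rcases Finset.mem_insert.1 this with h | h
  · exact Or.inl h
  · obtain ⟨p, _, hp⟩ := Finset.mem_image.1 h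
    exact Or.inr ⟨p, hp.symm⟩

lemma phi_lt_attain {v : V} (h : phi (G := G) y Z s v < Z) :
    ∃ p : G.Path s v, phi (G := G) y Z s v = wlen y p.1 := by
  rcases phi_attain (G := G) (y := y) (Z := Z) (s := s) v with h' | h'
  · exact absurd h' (ne_of_lt h)
  · exact h'

lemma phi_lipschitz (hy : ∀ e, 0 ≤ y e) {u v : V} (huv : G.Adj u v) :
    phi (G := G) y Z s v ≤ phi (G := G) y Z s u + y s(u, v) := by
  rcases phi_attain (G := G) (y := y) (Z := Z) (s := s) u with h | ⟨p, hp⟩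
  · rw [h]
    have h1 := phi_le_Z (G := G) (y := y) (Z := Z) (s := s) v
    linarith [hy s(u, v)]
  · have hpath := ((p.1.concat huv).bypass_isPath)
    have h1 := phi_le_wlen (G := G) (y := y) (Z := Z) v ⟨(p.1.concat huv).bypass, hpath⟩
    have h2 := wlen_bypass_le hy (p.1.concat huv)
    rw [wlen_concat] at h2
    rw [hp]
    calc phi (G := G) y Z s v ≤ wlen y (p.1.concat huv).bypass := h1
      _ ≤ wlen y p.1 + y s(u,v) := h2

end Phi

section Balls
variable [Fintype V] [DecidableRel G.Adj]
variable {y : Sym2 V → ℝ} {S : Finset V} {z : V → ℝ}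

lemma ball_disjoint (hy : ∀ e, 0 ≤ y e)
    (Hdual : ∀ s ∈ S, ∀ t ∈ S, s ≠ t → ∀ p : G.Path s t, z s + z t ≤ wlen y p.1)
    {s t u : V} (hs : s ∈ S) (ht : t ∈ S) (hst : s ≠ t)
    (h1 : phi (G := G) y (z s) s u < z s) (h2 : phi (G := G) y (z t) t u < z t) : False := by
  obtain ⟨p, hp⟩ := phi_lt_attain h1
  obtain ⟨q, hq⟩ := phi_lt_attain h2
  set w := p.1.append q.1.reverse with hw
  have hd := Hdual s hs t ht hst ⟨w.bypass, w.bypass_isPath⟩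
  have h3 : wlen y w.bypass ≤ wlen y w := wlen_bypass_le hy w
  have h4 : wlen y w = wlen y p.1 + wlen y q.1 := by
    rw [hw, wlen_append, wlen_reverse]
  simp only at hd
  linarith [hp, hq, hd, h3, h4]

lemma ball_mixed (hy : ∀ e, 0 ≤ y e)
    (Hdual : ∀ s ∈ S, ∀ t ∈ S, s ≠ t → ∀ p : G.Path s t, z s + z t ≤ wlen y p.1)
    {s t u v : V} (hs : s ∈ S) (ht : t ∈ S) (hst : s ≠ t) (huv : G.Adj u v)
    (h1 : phi (G := G) y (z s) s u < z s) (h2 : phi (G := G) y (z t) t v < z t) :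
    z s + z t ≤ phi (G := G) y (z s) s u + y s(u, v) + phi (G := G) y (z t) t v := by
  obtain ⟨p, hp⟩ := phi_lt_attain h1
  obtain ⟨q, hq⟩ := phi_lt_attain h2
  set w := (p.1.concat huv).append q.1.reverse with hw
  have hd := Hdual s hs t ht hst ⟨w.bypass, w.bypass_isPath⟩
  have h3 : wlen y w.bypass ≤ wlen y w := wlen_bypass_le hy w
  have h4 : wlen y w = wlen y p.1 + y s(u,v) + wlen y q.1 := by
    rw [hw, wlen_append, wlen_reverse, wlen_concat]
  simp only at hd
  linarith [hp, hq, hd, h3, h4]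

lemma edge_sum_le (hy : ∀ e, 0 ≤ y e) (hz : ∀ v, 0 ≤ z v)
    (Hdual : ∀ s ∈ S, ∀ t ∈ S, s ≠ t → ∀ p : G.Path s t, z s + z t ≤ wlen y p.1)
    {u v : V} (huv : G.Adj u v) :
    ∑ s ∈ S, |phi (G := G) y (z s) s u - phi (G := G) y (z s) s v| ≤ y s(u, v) := by
  set f : V → V → ℝ := fun s w => phi (G := G) y (z s) s w with hf
  set A := S.filter (fun s => f s u < f s v) with hA
  set B := S.filter (fun s => f s v < f s u) with hB
  have hAB : ∀ s ∈ S, s ∉ A ∪ B → |f s u - f s v| = 0 := by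
    intro s hsS hs
    rw [Finset.mem_union] at hs
    push_neg at hs
    obtain ⟨h1, h2⟩ := hs
    rw [hA, Finset.mem_filter] at h1
    rw [hB, Finset.mem_filter] at h2
    push_neg at h1 h2
    have := le_antisymm (h1 hsS) (h2 hsS)
    rw [this]; simp
  have hsum : ∑ s ∈ S, |f s u - f s v| = ∑ s ∈ A ∪ B, |f s u - f s v| := by
    symm
    apply Finset.sum_subset
    · intro s hs
      rcases Finset.mem_union.1 hs with h | h
      · exact Finset.mem_of_mem_filter _ h
      · exact Finset.mem_of_mem_filter _ h
    · exact hAB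
  rw [hsum]
  -- each of A, B has at most one element
  have hAu : ∀ s ∈ A, f s u < z s := by
    intro s hs
    rw [hA, Finset.mem_filter] at hs
    exact lt_of_lt_of_le hs.2 (phi_le_Z v)
  have hBv : ∀ s ∈ B, f s v < z s := by
    intro s hs
    rw [hB, Finset.mem_filter] at hs
    exact lt_of_lt_of_le hs.2 (phi_le_Z u)
  have hcardA : ∀ s ∈ A, ∀ t ∈ A, s = t := by
    intro s hs t ht
    by_contra hne
    exact ball_disjoint hy Hdual (Finset.mem_of_mem_filter _ hs) (Finset.mem_of_mem_filter _ ht)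
      hne (hAu s hs) (hAu t ht)
  have hcardB : ∀ s ∈ B, ∀ t ∈ B, s = t := by
    intro s hs t ht
    by_contra hne
    exact ball_disjoint hy Hdual (Finset.mem_of_mem_filter _ hs) (Finset.mem_of_mem_filter _ ht)
      hne (hBv s hs) (hBv t ht)
  have hyuv : y s(v, u) = y s(u, v) := by rw [Sym2.eq_swap]
  rcases A.eq_empty_or_nonempty with hAe | ⟨sa, hsa⟩
  · rcases B.eq_empty_or_nonempty with hBe | ⟨sb, hsb⟩
    · rw [hAe, hBe]
      simpa using hy s(u, v)
    · have hBsing : B = {sb} := by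
        apply Finset.eq_singleton_iff_unique_mem.2
        exact ⟨hsb, fun t ht => hcardB t ht sb hsb⟩
      rw [hAe, hBsing]
      simp only [Finset.empty_union, Finset.sum_singleton]
      have h1 : f sb v < f sb u := (Finset.mem_filter.1 hsb).2
      rw [abs_of_pos (by linarith)]
      have := phi_lipschitz (G := G) (y := y) (Z := z sb) (s := sb) hy huv.symm
      rw [hyuv] at this
      linarith
  · have hAsing : A = {sa} := by
      apply Finset.eq_singleton_iff_unique_mem.2
      exact ⟨hsa, fun t ht => hcardA t ht sa hsa⟩
    rcases B.eq_empty_or_nonempty with hBe | ⟨sb, hsb⟩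
    · rw [hAsing, hBe]
      simp only [Finset.union_empty, Finset.sum_singleton]
      have h1 : f sa u < f sa v := (Finset.mem_filter.1 hsa).2
      rw [abs_of_neg (by linarith), neg_sub]
      have := phi_lipschitz (G := G) (y := y) (Z := z sa) (s := sa) hy huv
      linarith
    · have hBsing : B = {sb} := by
        apply Finset.eq_singleton_iff_unique_mem.2
        exact ⟨hsb, fun t ht => hcardB t ht sb hsb⟩
      have hab : sa ≠ sb := by
        intro h
        have h1 : f sa u < f sa v := (Finset.mem_filter.1 hsa).2
        have h2 : f sb v < f sb u := (Finset.mem_filter.1 hsb).2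
        rw [h] at h1
        exact absurd h1 (not_lt.2 (le_of_lt h2))
      rw [hAsing, hBsing]
      rw [Finset.sum_union (by simp [Ne.symm hab, hab])]
      simp only [Finset.sum_singleton]
      have h1 : f sa u < f sa v := (Finset.mem_filter.1 hsa).2
      have h2 : f sb v < f sb u := (Finset.mem_filter.1 hsb).2
      rw [abs_of_neg (by linarith), neg_sub, abs_of_pos (by linarith)]
      have hmix := ball_mixed hy Hdual (Finset.mem_of_mem_filter _ hsa)
        (Finset.mem_of_mem_filter _ hsb) hab huv (hAu sa hsa) (hBv sb (by rw [hBsing]; simp))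
      have h3 : f sa v ≤ z sa := phi_le_Z v
      have h4 : f sb u ≤ z sb := phi_le_Z u
      linarith

end Balls

section Term
variable [Fintype V] [DecidableRel G.Adj]
variable {y : Sym2 V → ℝ} {S : Finset V} {z : V → ℝ}

lemma phi_terminal (hz : ∀ v, 0 ≤ z v)
    (Hdual : ∀ s ∈ S, ∀ t ∈ S, s ≠ t → ∀ p : G.Path s t, z s + z t ≤ wlen y p.1)
    {s t : V} (hs : s ∈ S) (ht : t ∈ S) (hts : t ≠ s) :
    phi (G := G) y (z s) s t = z s := by
  refine le_antisymm (phi_le_Z t) ?_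
  apply Finset.le_min'
  intro b hb
  rcases Finset.mem_insert.1 hb with rfl | hb
  · exact le_refl _
  · obtain ⟨p, _, rfl⟩ := Finset.mem_image.1 hb
    have := Hdual s hs t ht (Ne.symm hts) p
    linarith [hz t]

end Term

lemma walk_cross {X : Finset V} : ∀ {a b : V} (w : G.Walk a b), a ∈ X → b ∉ X →
    ∃ e ∈ w.edges, Sym2.lift ⟨fun i j => ((i ∈ X ∧ j ∉ X) ∨ (j ∈ X ∧ i ∉ X) : Prop),
      fun i j => propext (by tauto)⟩ e := by
  intro a b w
  induction w with
  | nil => intro h1 h2; exact absurd h1 h2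
  | @cons u v w' hadj p ih =>
    intro ha hb
    by_cases hv : v ∈ X
    · obtain ⟨e, he, hc⟩ := ih hv hb
      exact ⟨e, List.mem_cons_of_mem _ he, hc⟩
    · refine ⟨s(u, v), List.mem_cons_self, ?_⟩
      rw [Sym2.lift_mk]
      exact Or.inl ⟨ha, hv⟩

def dphi {V : Type*} (φ : V → ℝ) : Sym2 V → ℝ :=
  Sym2.lift ⟨fun a b => |φ a - φ b|, fun a b => by dsimp only; rw [abs_sub_comm]⟩

lemma dphi_mk {V : Type*} (φ : V → ℝ) (u v : V) : dphi φ s(u, v) = |φ u - φ v| := rfl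

lemma dphi_nonneg {V : Type*} (φ : V → ℝ) (e : Sym2 V) : 0 ≤ dphi φ e := by
  induction e using Sym2.ind with
  | _ a b => exact abs_nonneg _

lemma split_point {a b θ : ℝ} (hθ : 0 < θ) (ha : a = 0 ∨ θ ≤ a) (hb : b = 0 ∨ θ ≤ b) :
    |max (a - θ) 0 - max (b - θ) 0| +
      θ * (if (a = 0 ∧ ¬b = 0) ∨ (b = 0 ∧ ¬a = 0) then 1 else 0) = |a - b| := by
  rcases ha with ha | ha <;> rcases hb with hb | hb
  · subst ha; subst hb; simp
  · have hbne : ¬(b = 0) := by intro h; rw [h] at hb; linarith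
    subst ha
    rw [if_pos (Or.inl ⟨rfl, hbne⟩)]
    rw [max_eq_right (by linarith : (0:ℝ) - θ ≤ 0), max_eq_left (by linarith : (0:ℝ) ≤ b - θ)]
    rw [abs_of_nonpos (by linarith), abs_of_nonpos (by linarith)]
    ring
  · have hane : ¬(a = 0) := by intro h; rw [h] at ha; linarith
    subst hb
    rw [if_pos (Or.inr ⟨rfl, hane⟩)]
    rw [max_eq_right (by linarith : (0:ℝ) - θ ≤ 0), max_eq_left (by linarith : (0:ℝ) ≤ a - θ)]
    rw [abs_of_nonneg (by linarith), abs_of_nonneg (by linarith)]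
    ring
  · rw [if_neg (by
      rintro (⟨h, _⟩ | ⟨h, _⟩)
      · rw [h] at ha; linarith
      · rw [h] at hb; linarith)]
    rw [max_eq_left (by linarith : (0:ℝ) ≤ a - θ), max_eq_left (by linarith : (0:ℝ) ≤ b - θ)]
    have h1 : a - θ - (b - θ) = a - b := by ring
    rw [h1]
    ring

variable {V : Type*} [Fintype V] [DecidableEq V]
  (G : SimpleGraph V) [DecidableRel G.Adj]

lemma sliceIneq (S : Finset V) (x : Sym2 V → ℝ) (hx : ∀ e ∈ G.edgeSet, 0 ≤ x e)
    (r : ℝ) (hr : 0 ≤ r) (s : V) (hs : s ∈ S)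
    (cut : ∀ X : Finset V, s ∈ X → (∀ t ∈ S, t ∈ X → t = s) → r ≤ cutCap G x X) :
    ∀ n : ℕ, ∀ φ : V → ℝ, ∀ Z : ℝ, (Finset.image φ univ).card ≤ n → φ s = 0 →
    (∀ v, 0 ≤ φ v) → (∀ v, φ v ≤ Z) → (∀ t ∈ S, t ≠ s → φ t = Z) →
    r * Z ≤ ∑ e ∈ G.edgeFinset, x e * dphi φ e := by
  intro n
  induction n with
  | zero =>
    intro φ Z hcard _ _ _ _
    exfalso
    have h1 : φ s ∈ Finset.image φ univ := Finset.mem_image_of_mem φ (mem_univ s)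
    have := Finset.card_pos.2 ⟨_, h1⟩
    omega
  | succ n ih =>
    intro φ Z hcard hφs hφ0 hφZ hφt
    have hRHS : 0 ≤ ∑ e ∈ G.edgeFinset, x e * dphi φ e := by
      apply Finset.sum_nonneg
      intro e he
      exact mul_nonneg (hx e (SimpleGraph.mem_edgeFinset.1 he)) (dphi_nonneg φ e)
    by_cases hZ : Z ≤ 0
    · have : r * Z ≤ 0 := mul_nonpos_of_nonneg_of_nonpos hr hZ
      linarith
    push_neg at hZ
    set P := (Finset.image φ univ).filter (fun a => 0 < a) with hP
    rcases P.eq_empty_or_nonempty with hPe | hPne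
    · have hall : ∀ v, φ v = 0 := by
        intro v
        by_contra h
        have h1 : 0 < φ v := lt_of_le_of_ne (hφ0 v) (Ne.symm h)
        have h2 : φ v ∈ P := Finset.mem_filter.2 ⟨Finset.mem_image_of_mem φ (mem_univ v), h1⟩
        rw [hPe] at h2
        exact absurd h2 (Finset.notMem_empty _)
      have hcut := cut univ (mem_univ s) (fun t ht htX => by
        by_contra hne
        have h2 := hφt t ht hne
        rw [hall t] at h2
        linarith)
      have hzero : cutCap G x univ = 0 := by
        unfold cutCap
        apply Finset.sum_eq_zero
        intro e he
        induction e using Sym2.ind with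
        | _ a b => simp
      rw [hzero] at hcut
      have hre : r = 0 := le_antisymm hcut hr
      rw [hre, zero_mul]
      exact hRHS
    · set θ := P.min' hPne with hθdef
      have hθP : θ ∈ P := P.min'_mem hPne
      have hθpos : 0 < θ := (Finset.mem_filter.1 hθP).2
      have hθim : θ ∈ Finset.image φ univ := (Finset.mem_filter.1 hθP).1
      have hθZ : θ ≤ Z := by
        obtain ⟨v, _, hv⟩ := Finset.mem_image.1 hθim
        rw [← hv]; exact hφZ v
      have hdich : ∀ v, φ v = 0 ∨ θ ≤ φ v := by
        intro v
        by_cases h : φ v = 0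
        · exact Or.inl h
        · refine Or.inr (Finset.min'_le _ _ ?_)
          exact Finset.mem_filter.2 ⟨Finset.mem_image_of_mem φ (mem_univ v),
            lt_of_le_of_ne (hφ0 v) (Ne.symm h)⟩
      set X := univ.filter (fun v => φ v = 0) with hX
      have hsX : s ∈ X := Finset.mem_filter.2 ⟨mem_univ s, hφs⟩
      have hXS : ∀ t ∈ S, t ∈ X → t = s := by
        intro t ht htX
        by_contra hne
        have h1 := hφt t ht hne
        have h2 := (Finset.mem_filter.1 htX).2
        rw [h2] at h1
        linarith
      have hcut := cut X hsX hXS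
      set φ' : V → ℝ := fun v => max (φ v - θ) 0 with hφ'
      have hXmem : ∀ v : V, v ∈ X ↔ φ v = 0 := by
        intro v; simp [hX]
      have key : (∑ e ∈ G.edgeFinset, x e * dphi φ' e) + θ * cutCap G x X
          = ∑ e ∈ G.edgeFinset, x e * dphi φ e := by
        unfold cutCap
        rw [Finset.mul_sum, ← Finset.sum_add_distrib]
        apply Finset.sum_congr rfl
        intro e he
        induction e using Sym2.ind with
        | _ u v =>
          have hcond : ((u ∈ X ∧ v ∉ X) ∨ (v ∈ X ∧ u ∉ X)) ↔
              ((φ u = 0 ∧ ¬φ v = 0) ∨ (φ v = 0 ∧ ¬φ u = 0)) := by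
            rw [hXmem u, hXmem v]
          have hp := split_point hθpos (hdich u) (hdich v)
          rw [dphi_mk, dphi_mk, Sym2.lift_mk]
          by_cases hc : (φ u = 0 ∧ ¬φ v = 0) ∨ (φ v = 0 ∧ ¬φ u = 0)
          · rw [if_pos (hcond.2 hc)]
            rw [if_pos hc] at hp
            have : φ' = fun w => max (φ w - θ) 0 := hφ'
            rw [this]
            linear_combination x s(u, v) * hp
          · rw [if_neg (fun h => hc (hcond.1 h))]
            rw [if_neg hc] at hp
            have : φ' = fun w => max (φ w - θ) 0 := hφ'
            rw [this]
            linear_combination x s(u, v) * hp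
      -- cardinality decrease
      have hφ'card : (Finset.image φ' univ).card ≤ n := by
        have him : Finset.image φ' univ
            = (Finset.image φ univ).image (fun a => max (a - θ) 0) := by
          rw [Finset.image_image]
          rfl
        have h0T : (0 : ℝ) ∈ Finset.image φ univ := by
          rw [← hφs]; exact Finset.mem_image_of_mem φ (mem_univ s)
        have hsub : (Finset.image φ univ).image (fun a => max (a - θ) 0)
            ⊆ ((Finset.image φ univ).erase θ).image (fun a => max (a - θ) 0) := by
          intro b hb
          obtain ⟨a, haT, rfl⟩ := Finset.mem_image.1 hb
          by_cases haθ : a = θ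
          · apply Finset.mem_image.2
            refine ⟨0, Finset.mem_erase.2 ⟨(ne_of_lt hθpos), h0T⟩, ?_⟩
            rw [haθ]
            rw [max_eq_right (by linarith : (0:ℝ) - θ ≤ 0),
              max_eq_right (by linarith : θ - θ ≤ 0)]
          · exact Finset.mem_image.2 ⟨a, Finset.mem_erase.2 ⟨haθ, haT⟩, rfl⟩
        calc (Finset.image φ' univ).card
            ≤ (((Finset.image φ univ).erase θ).image (fun a => max (a - θ) 0)).card := by
              rw [him]; exact Finset.card_le_card hsub
          _ ≤ ((Finset.image φ univ).erase θ).card := Finset.card_image_le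
          _ = (Finset.image φ univ).card - 1 := Finset.card_erase_of_mem hθim
          _ ≤ n := by omega
      have hIH := ih φ' (Z - θ) hφ'card
        (by rw [hφ']; simp only; rw [hφs]; exact max_eq_right (by linarith))
        (fun v => le_max_right _ _)
        (fun v => max_le (by linarith [hφZ v]) (by linarith))
        (fun t ht hne => by
          rw [hφ']; simp only; rw [hφt t ht hne]; exact max_eq_left (by linarith))
      have hrθ : r * θ ≤ θ * cutCap G x X := by
        calc r * θ = θ * r := by ring
          _ ≤ θ * cutCap G x X := by
            apply mul_le_mul_of_nonneg_left hcut (le_of_lt hθpos)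
      have : r * Z = r * (Z - θ) + r * θ := by ring
      rw [this]
      calc r * (Z - θ) + r * θ
          ≤ (∑ e ∈ G.edgeFinset, x e * dphi φ' e) + θ * cutCap G x X := add_le_add hIH hrθ
        _ = ∑ e ∈ G.edgeFinset, x e * dphi φ e := key

section PartB
variable {V : Type*} [Fintype V] [DecidableEq V]
  {G : SimpleGraph V} [DecidableRel G.Adj] {S : Finset V} {c : Sym2 V → ℝ}

lemma flowOn_nonneg (M : Multiflow G S c) (e : Sym2 V) : 0 ≤ M.flowOn e := by
  apply Finset.sum_nonneg
  intro p _
  by_cases h : e ∈ (M.walk p).edges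
  · rw [if_pos h]; exact M.lam_nonneg p
  · rw [if_neg h]

lemma termVal_le_cutCap (M : Multiflow G S c) (s : V) (X : Finset V)
    (hsX : s ∈ X) (hX : ∀ t ∈ S, t ∈ X → t = s) :
    M.termVal s ≤ cutCap G M.flowOn X := by
  classical
  unfold cutCap
  have hswap : ∑ e ∈ G.edgeFinset,
      (if Sym2.lift ⟨fun i j => ((i ∈ X ∧ j ∉ X) ∨ (j ∈ X ∧ i ∉ X) : Prop),
        fun i j => propext (by tauto)⟩ e then M.flowOn e else 0)
      = ∑ p, ∑ e ∈ G.edgeFinset,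
        (if Sym2.lift ⟨fun i j => ((i ∈ X ∧ j ∉ X) ∨ (j ∈ X ∧ i ∉ X) : Prop),
          fun i j => propext (by tauto)⟩ e then (if e ∈ (M.walk p).edges then M.lam p else 0)
          else 0) := by
    rw [Finset.sum_comm]
    apply Finset.sum_congr rfl
    intro e _
    by_cases hc : Sym2.lift ⟨fun i j => ((i ∈ X ∧ j ∉ X) ∨ (j ∈ X ∧ i ∉ X) : Prop),
        fun i j => propext (by tauto)⟩ e
    · rw [if_pos hc]
      unfold Multiflow.flowOn
      apply Finset.sum_congr rfl
      intro p _
      rw [if_pos hc]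
    · rw [if_neg hc]
      symm
      apply Finset.sum_eq_zero
      intro p _
      rw [if_neg hc]
  rw [hswap]
  unfold Multiflow.termVal
  apply Finset.sum_le_sum
  intro p _
  by_cases hp : M.src p = s ∨ M.dst p = s
  · rw [if_pos hp]
    -- find a crossing edge on this walk
    have hcross : ∃ e ∈ (M.walk p).edges,
        Sym2.lift ⟨fun i j => ((i ∈ X ∧ j ∉ X) ∨ (j ∈ X ∧ i ∉ X) : Prop),
          fun i j => propext (by tauto)⟩ e := by
      rcases hp with hp | hp
      · -- src ∈ X, dst ∉ X
        have h1 : M.src p ∈ X := hp ▸ hsX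
        have h2 : M.dst p ∉ X := by
          intro h
          exact M.srcdst p (by rw [hp, hX _ (M.dstS p) h])
        exact walk_cross (M.walk p) h1 h2
      · have h1 : M.dst p ∈ X := hp ▸ hsX
        have h2 : M.src p ∉ X := by
          intro h
          exact M.srcdst p (by rw [hp, hX _ (M.srcS p) h])
        obtain ⟨e, he, hc⟩ := walk_cross (M.walk p).reverse h1 h2
        rw [SimpleGraph.Walk.edges_reverse, List.mem_reverse] at he
        exact ⟨e, he, hc⟩
    obtain ⟨e₀, he₀, hc₀⟩ := hcross
    have he₀F : e₀ ∈ G.edgeFinset :=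
      SimpleGraph.mem_edgeFinset.2 ((M.walk p).edges_subset_edgeSet he₀)
    have hterm : (if Sym2.lift ⟨fun i j => ((i ∈ X ∧ j ∉ X) ∨ (j ∈ X ∧ i ∉ X) : Prop),
        fun i j => propext (by tauto)⟩ e₀ then (if e₀ ∈ (M.walk p).edges then M.lam p else 0)
        else 0) = M.lam p := by
      rw [if_pos hc₀, if_pos he₀]
    calc M.lam p = _ := hterm.symm
      _ ≤ _ := by
        apply Finset.single_le_sum (f := fun e =>
          (if Sym2.lift ⟨fun i j => ((i ∈ X ∧ j ∉ X) ∨ (j ∈ X ∧ i ∉ X) : Prop),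
            fun i j => propext (by tauto)⟩ e then (if e ∈ (M.walk p).edges then M.lam p else 0)
            else 0)) _ he₀F
        intro e _
        by_cases h1 : Sym2.lift ⟨fun i j => ((i ∈ X ∧ j ∉ X) ∨ (j ∈ X ∧ i ∉ X) : Prop),
            fun i j => propext (by tauto)⟩ e
        · rw [if_pos h1]
          by_cases h2 : e ∈ (M.walk p).edges
          · rw [if_pos h2]; exact M.lam_nonneg p
          · rw [if_neg h2]
        · rw [if_neg h1]
  · rw [if_neg hp]
    apply Finset.sum_nonneg
    intro e _
    by_cases h1 : Sym2.lift ⟨fun i j => ((i ∈ X ∧ j ∉ X) ∨ (j ∈ X ∧ i ∉ X) : Prop),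
        fun i j => propext (by tauto)⟩ e
    · rw [if_pos h1]
      by_cases h2 : e ∈ (M.walk p).edges
      · rw [if_pos h2]; exact M.lam_nonneg p
      · rw [if_neg h2]
    · rw [if_neg h1]

lemma feasible_LPFeasible {r : V → ℝ} (M : Multiflow G S c) (hM : M.Feasible r) :
    LPFeasible G S c r M.flowOn := by
  constructor
  · intro e he
    exact ⟨flowOn_nonneg M e, M.cap e he⟩
  · intro s hs X hsX hX
    calc r s ≤ M.termVal s := hM s hs
      _ ≤ cutCap G M.flowOn X := termVal_le_cutCap M s X hsX hX

end PartB

section PartA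
variable {V : Type*} [Fintype V] [DecidableEq V]
  {G : SimpleGraph V} [DecidableRel G.Adj] {S : Finset V}

lemma sum_edges_eq_wlen (y : Sym2 V → ℝ) {s t : V} (p : G.Walk s t) (hp : p.IsPath) :
    (∑ e ∈ G.edgeFinset, if e ∈ p.edges then y e else 0) = wlen y p := by
  classical
  rw [← Finset.sum_filter]
  have hflt : G.edgeFinset.filter (· ∈ p.edges) = p.edges.toFinset := by
    ext e
    simp only [Finset.mem_filter, List.mem_toFinset, SimpleGraph.mem_edgeFinset]
    constructor
    · exact fun h => h.2
    · exact fun h => ⟨p.edges_subset_edgeSet h, h⟩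
  rw [hflt, List.sum_toFinset _ hp.edges_nodup]
  rfl

lemma exists_multiflow (c : Sym2 V → ℝ) (r : V → ℝ) (hrpos : ∀ s, 0 ≤ r s)
    (x : Sym2 V → ℝ) (hLP : LPFeasible G S c r x) :
    ∃ M : Multiflow G S c, M.Feasible r ∧ ∀ e ∈ G.edgeSet, M.flowOn e ≤ x e := by
  classical
  set ι := Σ u : V, Σ v : V, G.Path u v with hι
  set valid : ι → Prop := fun P => P.1 ∈ S ∧ P.2.1 ∈ S ∧ P.1 ≠ P.2.1 with hvalid
  set A : ({e : Sym2 V // e ∈ G.edgeFinset} ⊕ {s : V // s ∈ S}) → ι → ℝ := fun i P =>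
    Sum.elim (fun (e : {e : Sym2 V // e ∈ G.edgeFinset}) =>
        if valid P ∧ e.1 ∈ P.2.2.1.edges then (1:ℝ) else 0)
      (fun (t : {s : V // s ∈ S}) =>
        if valid P ∧ (P.1 = t.1 ∨ P.2.1 = t.1) then (-1:ℝ) else 0) i with hA
  set b : ({e : Sym2 V // e ∈ G.edgeFinset} ⊕ {s : V // s ∈ S}) → ℝ :=
    Sum.elim (fun e => x e.1) (fun t => -(r t.1)) with hb
  rcases farkas_ineq A b with ⟨lam, hlam, hcon⟩ | ⟨yd, hyd0, hcol, hobj⟩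
  · -- primal feasible: build the multiflow
    set K := {P : ι // valid P} with hK
    set eqv : Fin (Fintype.card K) ≃ K := (Fintype.equivFin K).symm with heqv
    have hflow : ∀ f : ι → ℝ,
        (∑ p : Fin (Fintype.card K), f (eqv p).1)
          = ∑ P : ι, if valid P then f P else 0 := by
      intro f
      rw [← Finset.sum_filter]
      rw [Finset.sum_subtype (p := valid) (Finset.univ.filter valid)
        (by intro x; simp) f]
      exact Equiv.sum_comp eqv (fun Q => f Q.1)
    have hcap : ∀ e ∈ G.edgeFinset,
        (∑ p : Fin (Fintype.card K),
          if e ∈ ((eqv p).1.2.2.1).edges then lam (eqv p).1 else 0) ≤ x e := by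
      intro e he
      have h1 := hcon (Sum.inl ⟨e, he⟩)
      rw [hb] at h1
      simp only [Sum.elim_inl] at h1
      calc (∑ p : Fin (Fintype.card K),
            if e ∈ ((eqv p).1.2.2.1).edges then lam (eqv p).1 else 0)
          = ∑ P : ι, if valid P then (if e ∈ P.2.2.1.edges then lam P else 0) else 0 :=
            hflow (fun P => if e ∈ P.2.2.1.edges then lam P else 0)
        _ = ∑ P : ι, A (Sum.inl ⟨e, he⟩) P * lam P := by
            apply Finset.sum_congr rfl
            intro P _
            rw [hA]
            simp only [Sum.elim_inl]
            by_cases hv : valid P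
            · by_cases hm : e ∈ P.2.2.1.edges
              · rw [if_pos hv, if_pos hm, if_pos ⟨hv, hm⟩, one_mul]
              · rw [if_pos hv, if_neg hm, if_neg (fun h => hm h.2), zero_mul]
            · rw [if_neg hv, if_neg (fun h => hv h.1), zero_mul]
        _ ≤ x e := h1
    have hterm : ∀ s ∈ S,
        r s ≤ ∑ p : Fin (Fintype.card K),
          if ((eqv p).1.1 = s ∨ (eqv p).1.2.1 = s) then lam (eqv p).1 else 0 := by
      intro s hs
      have h1 := hcon (Sum.inr ⟨s, hs⟩)
      rw [hb] at h1
      simp only [Sum.elim_inr] at h1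
      have h2 : (∑ P : ι, A (Sum.inr ⟨s, hs⟩) P * lam P)
          = -(∑ P : ι, if valid P then (if (P.1 = s ∨ P.2.1 = s) then lam P else 0) else 0) := by
        rw [← Finset.sum_neg_distrib]
        apply Finset.sum_congr rfl
        intro P _
        rw [hA]
        simp only [Sum.elim_inr]
        by_cases hv : valid P
        · by_cases hm : P.1 = s ∨ P.2.1 = s
          · rw [if_pos hv, if_pos hm, if_pos ⟨hv, hm⟩]; ring
          · rw [if_pos hv, if_neg hm, if_neg (fun h => hm h.2)]; ring
        · rw [if_neg hv, if_neg (fun h => hv h.1)]; ring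
      rw [h2] at h1
      have h3 := neg_le_neg h1
      rw [neg_neg, neg_neg] at h3
      calc r s ≤ ∑ P : ι, if valid P then (if (P.1 = s ∨ P.2.1 = s) then lam P else 0) else 0 := h3
        _ = _ := (hflow (fun P => if (P.1 = s ∨ P.2.1 = s) then lam P else 0)).symm
    refine ⟨⟨Fintype.card K, fun p => (eqv p).1.1, fun p => (eqv p).1.2.1,
      fun p => (eqv p).1.2.2.1, fun p => (eqv p).1.2.2.2,
      fun p => (eqv p).2.1, fun p => (eqv p).2.2.1, fun p => (eqv p).2.2.2,
      fun p => lam (eqv p).1, fun p => hlam _, ?_⟩, ?_, ?_⟩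
    · intro e he
      exact le_trans (hcap e (SimpleGraph.mem_edgeFinset.2 he)) (hLP.1 e he).2
    · intro s hs
      exact hterm s hs
    · intro e he
      exact hcap e (SimpleGraph.mem_edgeFinset.2 he)
  · -- dual case: derive a contradiction
    exfalso
    set y : Sym2 V → ℝ := fun e => if h : e ∈ G.edgeFinset then yd (Sum.inl ⟨e, h⟩) else 0 with hy
    set z : V → ℝ := fun v => if h : v ∈ S then yd (Sum.inr ⟨v, h⟩) else 0 with hz
    have hy0 : ∀ e, 0 ≤ y e := by
      intro e
      rw [hy]
      dsimp only
      by_cases h : e ∈ G.edgeFinset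
      · rw [dif_pos h]; exact hyd0 _
      · rw [dif_neg h]
    have hz0 : ∀ v, 0 ≤ z v := by
      intro v
      rw [hz]
      dsimp only
      by_cases h : v ∈ S
      · rw [dif_pos h]; exact hyd0 _
      · rw [dif_neg h]
    have hysub : ∀ es : {e : Sym2 V // e ∈ G.edgeFinset}, y es.1 = yd (Sum.inl es) := by
      rintro ⟨e, he⟩
      rw [hy]
      dsimp only
      exact dif_pos he
    have hzsub : ∀ ts : {s : V // s ∈ S}, z ts.1 = yd (Sum.inr ts) := by
      rintro ⟨t, ht⟩
      rw [hz]
      dsimp only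
      exact dif_pos ht
    -- dual constraint for every valid path
    have Hdual : ∀ s ∈ S, ∀ t ∈ S, s ≠ t → ∀ p : G.Path s t, z s + z t ≤ wlen y p.1 := by
      intro s hs t ht hst p
      have hv : valid ⟨s, t, p⟩ := ⟨hs, ht, hst⟩
      have h1 := hcol ⟨s, t, p⟩
      rw [Fintype.sum_sum_type] at h1
      have hedge : (∑ es : {e : Sym2 V // e ∈ G.edgeFinset},
          yd (Sum.inl es) * A (Sum.inl es) ⟨s, t, p⟩) = wlen y p.1 := by
        have step : ∀ es : {e : Sym2 V // e ∈ G.edgeFinset},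
            yd (Sum.inl es) * A (Sum.inl es) ⟨s, t, p⟩
              = if es.1 ∈ (p : G.Walk s t).edges then y es.1 else 0 := by
          intro es
          rw [hA]
          simp only [Sum.elim_inl]
          by_cases hm : es.1 ∈ (p : G.Walk s t).edges
          · rw [if_pos ⟨hv, hm⟩, if_pos hm, mul_one, hysub]
          · rw [if_neg (fun h => hm h.2), if_neg hm, mul_zero]
        rw [Finset.sum_congr rfl (fun es _ => step es)]
        rw [← Finset.sum_subtype G.edgeFinset (by intro x; rfl)
          (fun e => if e ∈ (p : G.Walk s t).edges then y e else 0)]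
        exact sum_edges_eq_wlen y p.1 p.2
      have hterm2 : (∑ ts : {s : V // s ∈ S},
          yd (Sum.inr ts) * A (Sum.inr ts) ⟨s, t, p⟩) = -(z s + z t) := by
        have step : ∀ ts : {s : V // s ∈ S},
            yd (Sum.inr ts) * A (Sum.inr ts) ⟨s, t, p⟩
              = -(if s = ts.1 ∨ t = ts.1 then z ts.1 else 0) := by
          intro ts
          rw [hA]
          simp only [Sum.elim_inr]
          by_cases hm : s = ts.1 ∨ t = ts.1
          · rw [if_pos ⟨hv, hm⟩, if_pos hm, hzsub]; ring
          · rw [if_neg (fun h => hm h.2), if_neg hm]; ring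
        rw [Finset.sum_congr rfl (fun ts _ => step ts)]
        rw [Finset.sum_neg_distrib]
        congr 1
        rw [← Finset.sum_subtype S (by intro x; rfl)
          (fun t' => if s = t' ∨ t = t' then z t' else 0)]
        have split : ∀ t' ∈ S, (if s = t' ∨ t = t' then z t' else 0)
            = (if s = t' then z t' else 0) + (if t = t' then z t' else 0) := by
          intro t' _
          by_cases h1 : s = t'
          · have h2 : ¬ t = t' := by
              intro h
              exact hst (h1.trans h.symm)
            rw [if_pos (Or.inl h1), if_pos h1, if_neg h2, add_zero]
          · by_cases h2 : t = t'
            · rw [if_pos (Or.inr h2), if_neg h1, if_pos h2, zero_add]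
            · rw [if_neg (by tauto), if_neg h1, if_neg h2, add_zero]
        rw [Finset.sum_congr rfl split, Finset.sum_add_distrib,
          Finset.sum_ite_eq S s (fun t' => z t'), Finset.sum_ite_eq S t (fun t' => z t'),
          if_pos hs, if_pos ht]
      rw [hedge, hterm2] at h1
      linarith
    -- apply the slicing bound for each terminal
    have per_s : ∀ s ∈ S, r s * z s
        ≤ ∑ e ∈ G.edgeFinset, x e * dphi (fun v => phi (G := G) y (z s) s v) e := by
      intro s hs
      exact sliceIneq G S x (fun e he => (hLP.1 e he).1) (r s) (hrpos s) s hs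
        (hLP.2 s hs) _ (fun v => phi (G := G) y (z s) s v) (z s) le_rfl
        (phi_self hy0 (hz0 s)) (fun v => phi_nonneg hy0 (hz0 s) v) (fun v => phi_le_Z v)
        (fun t ht hne => phi_terminal hz0 Hdual hs ht hne)
    have total : (∑ s ∈ S, r s * z s) ≤ ∑ e ∈ G.edgeFinset, x e * y e := by
      calc (∑ s ∈ S, r s * z s)
          ≤ ∑ s ∈ S, ∑ e ∈ G.edgeFinset, x e * dphi (fun v => phi (G := G) y (z s) s v) e :=
            Finset.sum_le_sum per_s
        _ = ∑ e ∈ G.edgeFinset, ∑ s ∈ S, x e * dphi (fun v => phi (G := G) y (z s) s v) e :=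
            Finset.sum_comm
        _ ≤ ∑ e ∈ G.edgeFinset, x e * y e := by
            apply Finset.sum_le_sum
            intro e he
            induction e using Sym2.ind with
            | _ u v =>
              have hadj : G.Adj u v := by
                have := SimpleGraph.mem_edgeFinset.1 he
                rwa [SimpleGraph.mem_edgeSet] at this
              have hes := edge_sum_le (S := S) (z := z) hy0 hz0 Hdual hadj
              have hxpos : 0 ≤ x s(u, v) := (hLP.1 _ (SimpleGraph.mem_edgeFinset.1 he)).1
              calc (∑ s ∈ S, x s(u,v) * dphi (fun w => phi (G := G) y (z s) s w) s(u,v))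
                  = x s(u,v) * ∑ s ∈ S, |phi (G := G) y (z s) s u - phi (G := G) y (z s) s v| := by
                    rw [Finset.mul_sum]
                    exact Finset.sum_congr rfl (fun i _ => rfl)
                _ ≤ x s(u,v) * y s(u,v) := mul_le_mul_of_nonneg_left hes hxpos
    -- the dual objective contradicts this
    rw [Fintype.sum_sum_type] at hobj
    have hobj1 : (∑ es : {e : Sym2 V // e ∈ G.edgeFinset}, yd (Sum.inl es) * b (Sum.inl es))
        = ∑ e ∈ G.edgeFinset, y e * x e := by
      have step : ∀ es : {e : Sym2 V // e ∈ G.edgeFinset},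
          yd (Sum.inl es) * b (Sum.inl es) = y es.1 * x es.1 := by
        intro es
        rw [hb]
        simp only [Sum.elim_inl]
        rw [hysub]
      rw [Finset.sum_congr rfl (fun es _ => step es)]
      rw [← Finset.sum_subtype G.edgeFinset (fun _ => Iff.rfl) (fun e => y e * x e)]
    have hobj2 : (∑ ts : {s : V // s ∈ S}, yd (Sum.inr ts) * b (Sum.inr ts))
        = -(∑ t ∈ S, z t * r t) := by
      have step : ∀ ts : {s : V // s ∈ S},
          yd (Sum.inr ts) * b (Sum.inr ts) = -(z ts.1 * r ts.1) := by
        intro ts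
        rw [hb]
        simp only [Sum.elim_inr]
        rw [hzsub]
        ring
      rw [Finset.sum_congr rfl (fun ts _ => step ts)]
      rw [Finset.sum_neg_distrib]
      congr 1
      rw [← Finset.sum_subtype S (fun _ => Iff.rfl) (fun t => z t * r t)]
    rw [hobj1, hobj2] at hobj
    have e1 : (∑ e ∈ G.edgeFinset, x e * y e) = ∑ e ∈ G.edgeFinset, y e * x e :=
      Finset.sum_congr rfl (fun e _ => mul_comm _ _)
    have e2 : (∑ s ∈ S, r s * z s) = ∑ t ∈ S, z t * r t :=
      Finset.sum_congr rfl (fun t _ => mul_comm _ _)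
    rw [e1, e2] at total
    linarith

end PartA
end


/-- Lemma 3.5, equivalence of (N) and (L).
(1) For any minimum-cost feasible multiflow `f`, the flow-support `x(e) := f(e)` is an
optimal solution of (L).  (2) For any optimal solution `x` of (L), there exists a
feasible multiflow `f` with `f(e) ≤ x(e)` for all edges, and any such multiflow is a
minimum-cost feasible multiflow.  In particular the minimum cost of a feasible
multiflow equals the optimal value of (L). -/
theorem stmt18 {V : Type*} [Fintype V] [DecidableEq V]
    (G : SimpleGraph V) [DecidableRel G.Adj] (S : Finset V)
    (c a : Sym2 V → ℕ) (r : V → ℕ)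
    (hfeas : ∀ s ∈ S, ∀ X : Finset V, s ∈ X → (∀ t ∈ S, t ∈ X → t = s) →
      (r s : ℝ) ≤ cutCap G (fun e => (c e : ℝ)) X) :
    (∀ M : Multiflow G S fun e => (c e : ℝ), M.Feasible (fun s => (r s : ℝ)) →
      (∀ M' : Multiflow G S fun e => (c e : ℝ), M'.Feasible (fun s => (r s : ℝ)) →
        M.cost (fun e => (a e : ℝ)) ≤ M'.cost (fun e => (a e : ℝ))) →
      (LPFeasible G S (fun e => (c e : ℝ)) (fun s => (r s : ℝ)) M.flowOn ∧
        ∀ x : Sym2 V → ℝ, LPFeasible G S (fun e => (c e : ℝ)) (fun s => (r s : ℝ)) x →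
          LPCost G (fun e => (a e : ℝ)) M.flowOn ≤ LPCost G (fun e => (a e : ℝ)) x)) ∧
    (∀ x : Sym2 V → ℝ, LPFeasible G S (fun e => (c e : ℝ)) (fun s => (r s : ℝ)) x →
      (∀ x' : Sym2 V → ℝ, LPFeasible G S (fun e => (c e : ℝ)) (fun s => (r s : ℝ)) x' →
        LPCost G (fun e => (a e : ℝ)) x ≤ LPCost G (fun e => (a e : ℝ)) x') →
      ((∃ M : Multiflow G S fun e => (c e : ℝ), M.Feasible (fun s => (r s : ℝ)) ∧
          ∀ e ∈ G.edgeSet, M.flowOn e ≤ x e) ∧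
        (∀ M : Multiflow G S fun e => (c e : ℝ), M.Feasible (fun s => (r s : ℝ)) →
          (∀ e ∈ G.edgeSet, M.flowOn e ≤ x e) →
          ∀ M' : Multiflow G S fun e => (c e : ℝ), M'.Feasible (fun s => (r s : ℝ)) →
            M.cost (fun e => (a e : ℝ)) ≤ M'.cost (fun e => (a e : ℝ))) ∧
        (∀ M : Multiflow G S fun e => (c e : ℝ), M.Feasible (fun s => (r s : ℝ)) →
          (∀ M' : Multiflow G S fun e => (c e : ℝ), M'.Feasible (fun s => (r s : ℝ)) →
            M.cost (fun e => (a e : ℝ)) ≤ M'.cost (fun e => (a e : ℝ))) →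
          M.cost (fun e => (a e : ℝ)) = LPCost G (fun e => (a e : ℝ)) x))) := by
  have hrpos : ∀ s : V, (0:ℝ) ≤ (r s : ℝ) := fun s => Nat.cast_nonneg _
  have hapos : ∀ e : Sym2 V, (0:ℝ) ≤ (a e : ℝ) := fun e => Nat.cast_nonneg _
  have hcost_le : ∀ (M : Multiflow G S fun e => (c e : ℝ)) (x : Sym2 V → ℝ),
      (∀ e ∈ G.edgeSet, M.flowOn e ≤ x e) →
      M.cost (fun e => (a e : ℝ)) ≤ LPCost G (fun e => (a e : ℝ)) x := by
    intro M x hle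
    unfold Multiflow.cost LPCost
    apply Finset.sum_le_sum
    intro e he
    exact mul_le_mul_of_nonneg_left (hle e (SimpleGraph.mem_edgeFinset.1 he)) (hapos e)
  have hcost_eq : ∀ M : Multiflow G S fun e => (c e : ℝ),
      LPCost G (fun e => (a e : ℝ)) M.flowOn = M.cost (fun e => (a e : ℝ)) := fun M => rfl
  constructor
  · intro M hM hMin
    refine ⟨feasible_LPFeasible M hM, ?_⟩
    intro x hx
    obtain ⟨Mx, hMxF, hMxle⟩ := exists_multiflow (fun e => (c e : ℝ)) (fun s => (r s : ℝ))
      hrpos x hx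
    have h1 : M.cost (fun e => (a e : ℝ)) ≤ Mx.cost (fun e => (a e : ℝ)) := hMin Mx hMxF
    have h2 := hcost_le Mx x hMxle
    rw [hcost_eq M]
    linarith
  · intro x hx hxOpt
    obtain ⟨Mx, hMxF, hMxle⟩ := exists_multiflow (fun e => (c e : ℝ)) (fun s => (r s : ℝ))
      hrpos x hx
    have hMxcost := hcost_le Mx x hMxle
    refine ⟨⟨Mx, hMxF, hMxle⟩, ?_, ?_⟩
    · intro M hMF hMle M' hM'F
      have h1 := hcost_le M x hMle
      have h2 := hxOpt _ (feasible_LPFeasible M' hM'F)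
      rw [hcost_eq M'] at h2
      linarith
    · intro M hMF hMin
      have h1 : M.cost (fun e => (a e : ℝ)) ≤ Mx.cost (fun e => (a e : ℝ)) := hMin Mx hMxF
      have h2 := hxOpt _ (feasible_LPFeasible M hMF)
      rw [hcost_eq M] at h2
      linarith
end

section
/- Let (V,E) be a graph with terminal set S ⊆ V of size k and nonterminal node set {1,…,n}, edge-capacities c : E → ℝ≥0, and no edge joining two terminals. Identify S ∪ {0} with S_k (0 the minimal element, the terminals the nonzero elements). Then the minimum over p = (p_1,…,p_n) ∈ (S_k)^n of (1/2)·Σ_{i=1}^{n} Σ_{s ∈ S : si ∈ E} c(si)·δ₀(s, p_i) + (1/2)·Σ_{ij ∈ E, 1 ≤ i,j ≤ n} c(ij)·δ₀(p_i, p_j) equals (1/2)·Σ_{s∈S} κ_s, where κ_s is the minimum of c(δX) over all X with s ∈ X ⊆ V ∖ (S ∖ {s}). -/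
open SimpleGraph Finset

/-- The metric `δ₀` on `S_k` (modelled as `Option α`, with `none` the element `0`):
`δ₀(u,v) = 0` if `u = v`, `1` if exactly one of `u, v` is `0`, and `2` otherwise. -/
def delta0 {α : Type*} [DecidableEq α] (u v : Option α) : ℝ :=
  if u = v then 0 else if u = none ∨ v = none then 1 else 2

section
variable {α : Type*} [DecidableEq α]

@[simp] lemma delta0_self (u : Option α) : delta0 u u = 0 := by simp [delta0]
@[simp] lemma delta0_none_left (u : Option α) : delta0 none u = if u = none then 0 else 1 := by
  by_cases h : u = none <;> simp [delta0, h, eq_comm]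
@[simp] lemma delta0_none_right (u : Option α) : delta0 u none = if u = none then 0 else 1 := by
  by_cases h : u = none <;> simp [delta0, h]
lemma delta0_some_some {a b : α} (h : a ≠ b) : delta0 (some a) (some b) = 2 := by
  simp [delta0, h]
end

section
variable {V : Type*} [Fintype V] [DecidableEq V] (G : SimpleGraph V) [DecidableRel G.Adj]

lemma sum_darts (f : Sym2 V → ℝ) : ∑ d : G.Dart, f d.edge = 2 * ∑ e ∈ G.edgeFinset, f e := by
  have h := Finset.sum_fiberwise_of_maps_to (s := (univ : Finset G.Dart)) (t := G.edgeFinset)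
      (g := SimpleGraph.Dart.edge) (fun d _ => mem_edgeFinset.mpr d.edge_mem) (fun d => f d.edge)
  rw [← h, Finset.mul_sum]
  refine Finset.sum_congr rfl fun e he => ?_
  rw [Finset.sum_congr rfl (fun d hd => by
    simp only [mem_filter] at hd
    rw [hd.2]), Finset.sum_const, nsmul_eq_mul,
    G.dart_edge_fiber_card e (mem_edgeFinset.mp he)]
  norm_num

lemma sum_darts_pairs (g : V → V → ℝ) :
    ∑ d : G.Dart, g d.fst d.snd = ∑ u, ∑ v, if G.Adj u v then g u v else 0 := by
  rw [← Finset.sum_product', ← Finset.sum_filter]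
  refine (Finset.sum_bij' (fun p hp => (⟨p, (Finset.mem_filter.mp hp).2⟩ : G.Dart))
    (fun d _ => d.toProd) ?_ ?_ ?_ ?_ ?_).symm
  · intro p hp; exact Finset.mem_univ _
  · intro d _; exact Finset.mem_filter.mpr ⟨Finset.mem_univ _, d.adj⟩
  · intro d _; rfl
  · intro p hp; rfl
  · intro d _; rfl

lemma sum_edges_pairs (g : V → V → ℝ) (hg : ∀ u v, g u v = g v u) :
    (∑ e ∈ G.edgeFinset, Sym2.lift ⟨g, fun u v => hg u v⟩ e)
      = (∑ u, ∑ v, if G.Adj u v then g u v else 0) / 2 := by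
  rw [← sum_darts_pairs]
  have : ∀ d : G.Dart, g d.fst d.snd = Sym2.lift ⟨g, fun u v => hg u v⟩ d.edge := fun d => rfl
  rw [Finset.sum_congr rfl fun d _ => this d, sum_darts]
  ring

open Classical in
lemma cutCap_pairs (c : Sym2 V → ℝ) (X : Finset V) :
    cutCap G c X = (∑ u, ∑ v, if G.Adj u v then
      (if (u ∈ X ∧ v ∉ X) ∨ (v ∈ X ∧ u ∉ X) then c s(u, v) else 0) else 0) / 2 := by
  rw [← sum_edges_pairs G (fun u v => if (u ∈ X ∧ v ∉ X) ∨ (v ∈ X ∧ u ∉ X) then c s(u, v) else 0)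
    (fun u v => by beta_reduce; rw [Sym2.eq_swap]; exact if_congr or_comm rfl rfl)]
  unfold cutCap
  refine Finset.sum_congr rfl fun e _ => ?_
  induction e using Sym2.ind with
  | _ u v =>
    simp only [Sym2.lift_mk]
    split_ifs with h
    · exact if_pos h
    · exact if_neg h
end

section
variable {V : Type*} [Fintype V] [DecidableEq V] (G : SimpleGraph V) [DecidableRel G.Adj]

lemma cutCap_posi (c : Sym2 V → ℝ) (hc : ∀ e, 0 ≤ c e) (X Y : Finset V) :
    cutCap G c (X \ Y) + cutCap G c (Y \ X) ≤ cutCap G c X + cutCap G c Y := by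
  unfold cutCap
  rw [← Finset.sum_add_distrib, ← Finset.sum_add_distrib]
  refine Finset.sum_le_sum fun e _ => ?_
  induction e using Sym2.ind with
  | _ u v =>
    have := hc s(u, v)
    simp only [Sym2.lift_mk, Finset.mem_sdiff]
    by_cases hux : u ∈ X <;> by_cases huy : u ∈ Y <;> by_cases hvx : v ∈ X <;>
      by_cases hvy : v ∈ Y <;> simp [hux, huy, hvx, hvy] <;> linarith
end

open Classical in
/-- The objective
`(1/2)·Σ_{i=1}^{n} Σ_{s ∈ S : si ∈ E} c(si)·δ₀(s, p_i) +
 (1/2)·Σ_{ij ∈ E, i,j nonterminal} c(ij)·δ₀(p_i, p_j)`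
of the `k`-submodular dual of the maximum free multiflow problem. -/
noncomputable def lcObj {V : Type*} [Fintype V] [DecidableEq V]
    (G : SimpleGraph V) [DecidableRel G.Adj] (S : Finset V) (c : Sym2 V → ℝ)
    (p : V → Option V) : ℝ :=
  (∑ i ∈ Finset.univ \ S, ∑ s ∈ S,
      if G.Adj s i then c s(s, i) * delta0 (some s) (p i) else 0) / 2 +
  (∑ e ∈ G.edgeFinset,
      if (∀ v ∈ e, v ∉ S) then
        c e * Sym2.lift ⟨fun i j => delta0 (p i) (p j), fun i j => by
          simp only [delta0]
          by_cases h : p i = p j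
          · rw [if_pos h, if_pos h.symm]
          · rw [if_neg h, if_neg (fun h' : p j = p i => h h'.symm)]
            exact if_congr or_comm rfl rfl⟩ e
      else 0) / 2

section
variable {V : Type*} [Fintype V] [DecidableEq V] (G : SimpleGraph V) [DecidableRel G.Adj]

def labelCut (S : Finset V) (p : V → Option V) (s : V) : Finset V :=
  insert s ((Finset.univ \ S).filter (fun i => p i = some s))

lemma mem_labelCut {S : Finset V} {p : V → Option V} {s w : V} :
    w ∈ labelCut S p s ↔ w = s ∨ (w ∉ S ∧ p w = some s) := by
  simp [labelCut, Finset.mem_sdiff]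

lemma mem_labelCut_of_term {S : Finset V} {p : V → Option V} {s w : V} (hw : w ∈ S) :
    w ∈ labelCut S p s ↔ w = s := by
  rw [mem_labelCut]
  simp [hw]

lemma mem_labelCut_of_nonterm {S : Finset V} {p : V → Option V} {s w : V}
    (hw : w ∉ S) (hs : s ∈ S) : w ∈ labelCut S p s ↔ p w = some s := by
  rw [mem_labelCut]
  constructor
  · rintro (rfl | h)
    · exact absurd hs hw
    · exact h.2
  · exact fun h => Or.inr ⟨hw, h⟩

lemma sum_indic_zero {S : Finset V} (C : V → Prop) [∀ s, Decidable (C s)] (r : ℝ)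
    (h : ∀ s ∈ S, ¬ C s) : ∑ s ∈ S, (if C s then r else 0) = 0 :=
  Finset.sum_eq_zero fun s hs => if_neg (h s hs)

lemma sum_indic_one {S : Finset V} {a : V} (ha : a ∈ S) (C : V → Prop) [∀ s, Decidable (C s)]
    (r : ℝ) (h : ∀ s ∈ S, C s ↔ s = a) : ∑ s ∈ S, (if C s then r else 0) = r := by
  rw [Finset.sum_congr rfl fun s hs => if_congr (h s hs) rfl rfl]
  simp [Finset.sum_ite_eq', ha]

lemma sum_indic_two {S : Finset V} {a b : V} (ha : a ∈ S) (hb : b ∈ S) (hab : a ≠ b)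
    (C : V → Prop) [∀ s, Decidable (C s)] (r : ℝ) (h : ∀ s ∈ S, C s ↔ s = a ∨ s = b) :
    ∑ s ∈ S, (if C s then r else 0) = r + r := by
  have : ∀ s ∈ S, (if C s then r else 0)
      = (if s = a then r else 0) + (if s = b then r else 0) := by
    intro s hs
    rw [if_congr (h s hs) rfl rfl]
    by_cases h1 : s = a <;> by_cases h2 : s = b <;> simp_all
  rw [Finset.sum_congr rfl this, Finset.sum_add_distrib]
  simp [Finset.sum_ite_eq', ha, hb]

open Classical in
lemma core_identity (S : Finset V) (c : Sym2 V → ℝ) (p : V → Option V)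
    (hp : ∀ i s, p i = some s → s ∈ S) {u v : V}
    (hfree : ¬ (u ∈ S ∧ v ∈ S)) :
    ∑ s ∈ S, (if (u ∈ labelCut S p s ∧ v ∉ labelCut S p s)
        ∨ (v ∈ labelCut S p s ∧ u ∉ labelCut S p s) then c s(u, v) else 0)
    = (if u ∈ S ∧ v ∉ S then c s(u, v) * delta0 (some u) (p v) else 0)
    + (if v ∈ S ∧ u ∉ S then c s(u, v) * delta0 (some v) (p u) else 0)
    + (if u ∉ S ∧ v ∉ S then c s(u, v) * delta0 (p u) (p v) else 0) := by
  by_cases hu : u ∈ S <;> by_cases hv : v ∈ S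
  · exact absurd ⟨hu, hv⟩ hfree
  · -- u ∈ S, v ∉ S
    rw [if_pos ⟨hu, hv⟩, if_neg (fun h => hv h.1), if_neg (fun h => h.1 hu), add_zero, add_zero]
    rcases hpv : p v with _ | t
    · rw [sum_indic_one hu _ _ (fun s hs => by
        rw [mem_labelCut_of_term hu, mem_labelCut_of_nonterm hv hs, hpv]
        constructor
        · rintro (⟨rfl, -⟩ | ⟨h, -⟩)
          · rfl
          · exact absurd h (by simp)
        · rintro rfl
          exact Or.inl ⟨rfl, by simp⟩)]
      simp
    · have htS := hp v t hpv
      by_cases htu : t = u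
      · subst htu
        rw [sum_indic_zero _ _ (fun s hs => by
          rw [mem_labelCut_of_term hu, mem_labelCut_of_nonterm hv hs, hpv]
          simp only [Option.some.injEq]
          tauto), delta0_self, mul_zero]
      · rw [sum_indic_two hu htS (fun h => htu h.symm) _ _ (fun s hs => by
          rw [mem_labelCut_of_term hu, mem_labelCut_of_nonterm hv hs, hpv]
          simp only [Option.some.injEq]
          constructor
          · rintro (⟨rfl, -⟩ | ⟨rfl, -⟩)
            · exact Or.inl rfl
            · exact Or.inr rfl
          · rintro (rfl | rfl)
            · exact Or.inl ⟨rfl, fun h => htu h⟩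
            · exact Or.inr ⟨rfl, fun h => htu h.symm⟩),
          delta0_some_some (fun h => htu h.symm)]
        ring
  · -- v ∈ S, u ∉ S
    rw [if_neg (fun h => hu h.1), if_pos ⟨hv, hu⟩, if_neg (fun h => h.2 hv), zero_add, add_zero]
    rcases hpu : p u with _ | t
    · rw [sum_indic_one hv _ _ (fun s hs => by
        rw [mem_labelCut_of_term hv, mem_labelCut_of_nonterm hu hs, hpu]
        constructor
        · rintro (⟨h, -⟩ | ⟨rfl, -⟩)
          · exact absurd h (by simp)
          · rfl
        · rintro rfl
          exact Or.inr ⟨rfl, by simp⟩)]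
      simp
    · have htS := hp u t hpu
      by_cases htv : t = v
      · subst htv
        rw [sum_indic_zero _ _ (fun s hs => by
          rw [mem_labelCut_of_term hv, mem_labelCut_of_nonterm hu hs, hpu]
          simp only [Option.some.injEq]
          tauto), delta0_self, mul_zero]
      · rw [sum_indic_two hv htS (fun h => htv h.symm) _ _ (fun s hs => by
          rw [mem_labelCut_of_term hv, mem_labelCut_of_nonterm hu hs, hpu]
          simp only [Option.some.injEq]
          constructor
          · rintro (⟨rfl, -⟩ | ⟨rfl, -⟩)
            · exact Or.inr rfl
            · exact Or.inl rfl
          · rintro (rfl | rfl)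
            · exact Or.inr ⟨rfl, fun h => htv h⟩
            · exact Or.inl ⟨rfl, fun h => htv h.symm⟩),
          delta0_some_some (fun h => htv h.symm)]
        ring
  · -- u ∉ S, v ∉ S
    rw [if_neg (fun h : u ∈ S ∧ v ∉ S => hu h.1), if_neg (fun h : v ∈ S ∧ u ∉ S => hv h.1),
      zero_add, zero_add, if_pos ⟨hu, hv⟩]
    rcases hpu : p u with _ | a <;> rcases hpv : p v with _ | b
    · rw [sum_indic_zero _ _ (fun s hs => by
        rw [mem_labelCut_of_nonterm hu hs, mem_labelCut_of_nonterm hv hs, hpu, hpv]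
        simp), delta0_self, mul_zero]
    · have hbS := hp v b hpv
      rw [sum_indic_one hbS _ _ (fun s hs => by
        rw [mem_labelCut_of_nonterm hu hs, mem_labelCut_of_nonterm hv hs, hpu, hpv]
        simp only [Option.some.injEq]
        constructor
        · rintro (⟨h, -⟩ | ⟨rfl, -⟩)
          · exact absurd h (by simp)
          · rfl
        · rintro rfl
          exact Or.inr ⟨rfl, by simp⟩)]
      simp
    · have haS := hp u a hpu
      rw [sum_indic_one haS _ _ (fun s hs => by
        rw [mem_labelCut_of_nonterm hu hs, mem_labelCut_of_nonterm hv hs, hpu, hpv]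
        simp only [Option.some.injEq]
        constructor
        · rintro (⟨rfl, -⟩ | ⟨h, -⟩)
          · rfl
          · exact absurd h (by simp)
        · rintro rfl
          exact Or.inl ⟨rfl, by simp⟩)]
      simp
    · have haS := hp u a hpu
      have hbS := hp v b hpv
      by_cases hab : a = b
      · subst hab
        rw [sum_indic_zero _ _ (fun s hs => by
          rw [mem_labelCut_of_nonterm hu hs, mem_labelCut_of_nonterm hv hs, hpu, hpv]
          tauto), delta0_self, mul_zero]
      · rw [sum_indic_two haS hbS hab _ _ (fun s hs => by
          rw [mem_labelCut_of_nonterm hu hs, mem_labelCut_of_nonterm hv hs, hpu, hpv]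
          simp only [Option.some.injEq]
          constructor
          · rintro (⟨rfl, -⟩ | ⟨rfl, -⟩)
            · exact Or.inl rfl
            · exact Or.inr rfl
          · rintro (rfl | rfl)
            · exact Or.inl ⟨rfl, fun h => hab h.symm⟩
            · exact Or.inr ⟨rfl, fun h => hab h⟩),
          delta0_some_some hab]
        ring

lemma delta0_comm {α : Type*} [DecidableEq α] (x y : Option α) :
    delta0 x y = delta0 y x := by
  by_cases h : x = y
  · rw [h]
  · rw [delta0, delta0, if_neg h, if_neg (fun h' : y = x => h h'.symm)]
    exact if_congr or_comm rfl rfl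

open Classical in
lemma key_eq (S : Finset V) (c : Sym2 V → ℝ) (p : V → Option V)
    (hp : ∀ i s, p i = some s → s ∈ S)
    (hSfree : ∀ s ∈ S, ∀ t ∈ S, ¬ G.Adj s t) :
    ∑ s ∈ S, cutCap G c (labelCut S p s) = 2 * lcObj G S c p := by
  have h1 : ∑ s ∈ S, cutCap G c (labelCut S p s)
      = (∑ u, ∑ v, if G.Adj u v then
          ((if u ∈ S ∧ v ∉ S then c s(u, v) * delta0 (some u) (p v) else 0)
          + (if v ∈ S ∧ u ∉ S then c s(u, v) * delta0 (some v) (p u) else 0)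
          + (if u ∉ S ∧ v ∉ S then c s(u, v) * delta0 (p u) (p v) else 0)) else 0) / 2 := by
    rw [Finset.sum_congr rfl fun s _ => cutCap_pairs G c (labelCut S p s), ← Finset.sum_div]
    congr 1
    rw [Finset.sum_comm]
    refine Finset.sum_congr rfl fun u _ => ?_
    rw [Finset.sum_comm]
    refine Finset.sum_congr rfl fun v _ => ?_
    by_cases hadj : G.Adj u v
    · simp only [if_pos hadj]
      exact core_identity S c p hp (fun h => hSfree u h.1 v h.2 hadj)
    · simp [hadj]
  have h2 : (∑ u, ∑ v, if G.Adj u v then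
          ((if u ∈ S ∧ v ∉ S then c s(u, v) * delta0 (some u) (p v) else 0)
          + (if v ∈ S ∧ u ∉ S then c s(u, v) * delta0 (some v) (p u) else 0)
          + (if u ∉ S ∧ v ∉ S then c s(u, v) * delta0 (p u) (p v) else 0)) else 0)
      = (∑ u, ∑ v, if G.Adj u v then
          (if u ∈ S ∧ v ∉ S then c s(u, v) * delta0 (some u) (p v) else 0) else 0)
      + (∑ u, ∑ v, if G.Adj u v then
          (if v ∈ S ∧ u ∉ S then c s(u, v) * delta0 (some v) (p u) else 0) else 0)
      + (∑ u, ∑ v, if G.Adj u v then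
          (if u ∉ S ∧ v ∉ S then c s(u, v) * delta0 (p u) (p v) else 0) else 0) := by
    rw [← Finset.sum_add_distrib, ← Finset.sum_add_distrib]
    refine Finset.sum_congr rfl fun u _ => ?_
    rw [← Finset.sum_add_distrib, ← Finset.sum_add_distrib]
    refine Finset.sum_congr rfl fun v _ => ?_
    by_cases hadj : G.Adj u v <;> simp [hadj]
  have hT1 : (∑ u, ∑ v, if G.Adj u v then
          (if u ∈ S ∧ v ∉ S then c s(u, v) * delta0 (some u) (p v) else 0) else 0)
      = ∑ i ∈ Finset.univ \ S, ∑ s ∈ S,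
          if G.Adj s i then c s(s, i) * delta0 (some s) (p i) else 0 := by
    rw [← Finset.sum_subset (Finset.subset_univ S) (fun u _ hu => Finset.sum_eq_zero fun v _ => by
        by_cases h : G.Adj u v <;> simp [h, hu])]
    rw [Finset.sum_congr rfl (fun u hu => (Finset.sum_subset
        (Finset.sdiff_subset) (fun v _ hv => by
          have hvS : v ∈ S := by
            by_contra h
            exact hv (Finset.mem_sdiff.mpr ⟨Finset.mem_univ v, h⟩)
          by_cases h : G.Adj u v <;> simp [h, hvS])).symm)]
    rw [Finset.sum_comm]
    refine Finset.sum_congr rfl fun i hi => Finset.sum_congr rfl fun s hs => ?_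
    have hiS : i ∉ S := (Finset.mem_sdiff.mp hi).2
    by_cases h : G.Adj s i
    · rw [if_pos h, if_pos h, if_pos (show s ∈ S ∧ i ∉ S from ⟨hs, hiS⟩)]
    · rw [if_neg h, if_neg h]
  have hT2 : (∑ u, ∑ v, if G.Adj u v then
          (if v ∈ S ∧ u ∉ S then c s(u, v) * delta0 (some v) (p u) else 0) else 0)
      = ∑ i ∈ Finset.univ \ S, ∑ s ∈ S,
          if G.Adj s i then c s(s, i) * delta0 (some s) (p i) else 0 := by
    rw [← Finset.sum_subset (Finset.sdiff_subset (s := (Finset.univ : Finset V)) (t := S))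
        (fun u _ hu => Finset.sum_eq_zero fun v _ => by
          have huS : u ∈ S := by
            by_contra h
            exact hu (Finset.mem_sdiff.mpr ⟨Finset.mem_univ u, h⟩)
          by_cases h : G.Adj u v <;> simp [h, huS])]
    refine Finset.sum_congr rfl fun i hi => ?_
    have hiS : i ∉ S := (Finset.mem_sdiff.mp hi).2
    rw [← Finset.sum_subset (Finset.subset_univ S) (fun v _ hv => by
        by_cases h : G.Adj i v <;> simp [h, hv])]
    refine Finset.sum_congr rfl fun s hs => ?_
    by_cases h : G.Adj i s
    · rw [if_pos h, if_pos ((G.adj_comm i s).mp h),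
        if_pos (show s ∈ S ∧ i ∉ S from ⟨hs, hiS⟩),
        show s(i, s) = s(s, i) from Sym2.eq_swap]
    · rw [if_neg h, if_neg (fun h' => h ((G.adj_comm s i).mp h'))]
  have hT3 : (∑ u, ∑ v, if G.Adj u v then
          (if u ∉ S ∧ v ∉ S then c s(u, v) * delta0 (p u) (p v) else 0) else 0)
      = 2 * ∑ e ∈ G.edgeFinset,
          (if (∀ v ∈ e, v ∉ S) then
            c e * Sym2.lift ⟨fun i j => delta0 (p i) (p j), fun i j => by
              simp only [delta0]
              by_cases h : p i = p j
              · rw [if_pos h, if_pos h.symm]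
              · rw [if_neg h, if_neg (fun h' : p j = p i => h h'.symm)]
                exact if_congr or_comm rfl rfl⟩ e
          else 0) := by
    have hsym : ∀ u v : V, (if u ∉ S ∧ v ∉ S then c s(u, v) * delta0 (p u) (p v) else 0)
        = (if v ∉ S ∧ u ∉ S then c s(v, u) * delta0 (p v) (p u) else 0) := by
      intro u v
      rw [Sym2.eq_swap, delta0_comm]
      exact if_congr and_comm rfl rfl
    have := sum_edges_pairs G
      (fun u v => if u ∉ S ∧ v ∉ S then c s(u, v) * delta0 (p u) (p v) else 0) hsym
    have hE : (∑ e ∈ G.edgeFinset,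
          (if (∀ v ∈ e, v ∉ S) then
            c e * Sym2.lift ⟨fun i j => delta0 (p i) (p j), fun i j => by
              simp only [delta0]
              by_cases h : p i = p j
              · rw [if_pos h, if_pos h.symm]
              · rw [if_neg h, if_neg (fun h' : p j = p i => h h'.symm)]
                exact if_congr or_comm rfl rfl⟩ e
          else 0))
        = ∑ e ∈ G.edgeFinset, Sym2.lift
            ⟨fun u v => if u ∉ S ∧ v ∉ S then c s(u, v) * delta0 (p u) (p v) else 0,
              fun u v => hsym u v⟩ e := by
      refine Finset.sum_congr rfl fun e _ => ?_
      induction e using Sym2.ind with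
      | _ u v =>
        simp only [Sym2.lift_mk]
        have hiff : (∀ w ∈ s(u, v), w ∉ S) ↔ (u ∉ S ∧ v ∉ S) := by
          simp [Sym2.mem_iff, or_imp, forall_and, forall_eq]
        simp only [hiff]
    rw [hE, this]
    ring
  rw [h1, h2, hT1, hT2, hT3]
  unfold lcObj
  ring
end

section
variable {V : Type*} [Fintype V] [DecidableEq V] (G : SimpleGraph V) [DecidableRel G.Adj]

lemma exists_disjoint_family (S : Finset V) (c : Sym2 V → ℝ) (hc : ∀ e, 0 ≤ c e) (κ : V → ℝ)
    (hκ : ∀ s ∈ S, IsLeast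
      {v : ℝ | ∃ X : Finset V, s ∈ X ∧ (∀ t ∈ S, t ∈ X → t = s) ∧ cutCap G c X = v} (κ s)) :
    ∃ X : V → Finset V,
      (∀ s ∈ S, s ∈ X s ∧ (∀ t ∈ S, t ∈ X s → t = s) ∧ cutCap G c (X s) = κ s) ∧
      (∀ s ∈ S, ∀ t ∈ S, s ≠ t → Disjoint (X s) (X t)) := by
  classical
  have hex : ∃ X : V → Finset V,
      ∀ s ∈ S, s ∈ X s ∧ (∀ t ∈ S, t ∈ X s → t = s) ∧ cutCap G c (X s) = κ s := by
    choose f hf using fun s (hs : s ∈ S) => (hκ s hs).1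
    refine ⟨fun s => if hs : s ∈ S then f s hs else ∅, fun s hs => ?_⟩
    simp only [dif_pos hs]
    exact hf s hs
  obtain ⟨X0, hX0⟩ := hex
  have key : ∀ n : ℕ, ∀ X : V → Finset V,
      (∀ s ∈ S, s ∈ X s ∧ (∀ t ∈ S, t ∈ X s → t = s) ∧ cutCap G c (X s) = κ s) →
      (∑ s ∈ S, (X s).card) = n →
      ∃ Y : V → Finset V,
        (∀ s ∈ S, s ∈ Y s ∧ (∀ t ∈ S, t ∈ Y s → t = s) ∧ cutCap G c (Y s) = κ s) ∧
        (∀ s ∈ S, ∀ t ∈ S, s ≠ t → Disjoint (Y s) (Y t)) := by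
    intro n
    induction n using Nat.strong_induction_on with
    | _ n ih =>
      intro X hX hn
      by_cases hd : ∀ s ∈ S, ∀ t ∈ S, s ≠ t → Disjoint (X s) (X t)
      · exact ⟨X, hX, hd⟩
      · push_neg at hd
        obtain ⟨s, hs, t, ht, hst, hnd⟩ := hd
        obtain ⟨w, hws, hwt⟩ := Finset.not_disjoint_iff.mp hnd
        set Y : V → Finset V :=
          fun r => if r = s then X s \ X t else if r = t then X t \ X s else X r with hY
        have hsXt : s ∉ X t := fun h => hst ((hX t ht).2.1 s hs h)
        have htXs : t ∉ X s := fun h => hst ((hX s hs).2.1 t ht h).symm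
        have hs_in : s ∈ X s \ X t := Finset.mem_sdiff.mpr ⟨(hX s hs).1, hsXt⟩
        have ht_in : t ∈ X t \ X s := Finset.mem_sdiff.mpr ⟨(hX t ht).1, htXs⟩
        have hls : κ s ≤ cutCap G c (X s \ X t) := (hκ s hs).2 ⟨X s \ X t, hs_in,
          fun t' ht' hmem => (hX s hs).2.1 t' ht' (Finset.mem_sdiff.mp hmem).1, rfl⟩
        have hlt : κ t ≤ cutCap G c (X t \ X s) := (hκ t ht).2 ⟨X t \ X s, ht_in,
          fun t' ht' hmem => (hX t ht).2.1 t' ht' (Finset.mem_sdiff.mp hmem).1, rfl⟩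
        have hsum := cutCap_posi G c hc (X s) (X t)
        rw [(hX s hs).2.2, (hX t ht).2.2] at hsum
        have heqs : cutCap G c (X s \ X t) = κ s := le_antisymm (by linarith) hls
        have heqt : cutCap G c (X t \ X s) = κ t := le_antisymm (by linarith) hlt
        have hY_good : ∀ r ∈ S,
            r ∈ Y r ∧ (∀ t' ∈ S, t' ∈ Y r → t' = r) ∧ cutCap G c (Y r) = κ r := by
          intro r hr
          by_cases h1 : r = s
          · subst h1
            simp only [hY, if_pos rfl]
            exact ⟨hs_in,
              fun t' ht' hm => (hX r hr).2.1 t' ht' (Finset.mem_sdiff.mp hm).1, heqs⟩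
          · by_cases h2 : r = t
            · subst h2
              simp only [hY, if_neg h1, if_pos rfl]
              exact ⟨ht_in,
                fun t' ht' hm => (hX r hr).2.1 t' ht' (Finset.mem_sdiff.mp hm).1, heqt⟩
            · simp only [hY, if_neg h1, if_neg h2]
              exact hX r hr
        have hmeas : ∑ r ∈ S, (Y r).card < n := by
          rw [← hn]
          refine Finset.sum_lt_sum (fun r _ => ?_) ⟨s, hs, ?_⟩
          · by_cases h1 : r = s
            · subst h1
              simp only [hY, if_pos rfl]
              exact Finset.card_le_card Finset.sdiff_subset
            · by_cases h2 : r = t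
              · subst h2
                simp only [hY, if_neg h1, if_pos rfl]
                exact Finset.card_le_card Finset.sdiff_subset
              · simp only [hY, if_neg h1, if_neg h2]
                exact le_refl _
          · simp only [hY, if_pos rfl]
            exact Finset.card_lt_card ((Finset.ssubset_iff_of_subset Finset.sdiff_subset).mpr
              ⟨w, hws, fun hm => (Finset.mem_sdiff.mp hm).2 hwt⟩)
        exact ih _ hmeas Y hY_good rfl
  exact key _ X0 hX0 rfl
end

/-- Section 3.4.1: Lovász–Cherkassky via `k`-submodular minimization.
For a graph with terminal set `S` (no edge joining two terminals) and nonterminal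
nodes carrying labels in `S_k = S ∪ {0}`, the minimum of the `k`-submodular relaxation
objective equals `(1/2)·Σ_{s ∈ S} κ_s`, where `κ_s` is the minimum capacity of an
`(s, S∖{s})`-cut. -/
theorem stmt19 {V : Type*} [Fintype V] [DecidableEq V]
    (G : SimpleGraph V) [DecidableRel G.Adj] (S : Finset V)
    (c : Sym2 V → ℝ) (hc : ∀ e, 0 ≤ c e)
    (hSfree : ∀ s ∈ S, ∀ t ∈ S, ¬ G.Adj s t)
    (κ : V → ℝ)
    (hκ : ∀ s ∈ S, IsLeast
      {v : ℝ | ∃ X : Finset V, s ∈ X ∧ (∀ t ∈ S, t ∈ X → t = s) ∧ cutCap G c X = v}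
      (κ s)) :
    IsLeast
      {v : ℝ | ∃ p : V → Option V, (∀ i s, p i = some s → s ∈ S) ∧ lcObj G S c p = v}
      ((∑ s ∈ S, κ s) / 2) := by
  classical
  constructor
  · -- membership: build labeling from a disjoint family of minimum cuts
    obtain ⟨X, hG, hD⟩ := exists_disjoint_family G S c hc κ hκ
    set p : V → Option V :=
      fun i => if h : ∃ s, s ∈ S ∧ i ∈ X s then some h.choose else none with hpdef
    have hp : ∀ i s, p i = some s → s ∈ S := by
      intro i s h
      simp only [hpdef] at h
      by_cases hex : ∃ s, s ∈ S ∧ i ∈ X s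
      · rw [dif_pos hex] at h
        exact Option.some.inj h ▸ hex.choose_spec.1
      · rw [dif_neg hex] at h
        cases h
    have hps : ∀ i, ∀ s ∈ S, (p i = some s ↔ i ∈ X s) := by
      intro i s hs
      constructor
      · intro h
        by_cases hex : ∃ s, s ∈ S ∧ i ∈ X s
        · simp only [hpdef] at h
          rw [dif_pos hex] at h
          exact Option.some.inj h ▸ hex.choose_spec.2
        · simp only [hpdef] at h
          rw [dif_neg hex] at h
          cases h
      · intro h
        have hex : ∃ s, s ∈ S ∧ i ∈ X s := ⟨s, hs, h⟩
        have hcs : hex.choose = s := by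
          by_contra hne
          exact Finset.disjoint_left.mp (hD _ hex.choose_spec.1 s hs hne)
            hex.choose_spec.2 h
        simp only [hpdef]
        rw [dif_pos hex, hcs]
    have hXeq : ∀ s ∈ S, labelCut S p s = X s := by
      intro s hs
      ext w
      rw [mem_labelCut]
      constructor
      · rintro (rfl | ⟨hw, hpw⟩)
        · exact (hG _ hs).1
        · exact (hps w s hs).mp hpw
      · intro hw
        by_cases hwS : w ∈ S
        · exact Or.inl ((hG s hs).2.1 w hwS hw)
        · exact Or.inr ⟨hwS, (hps w s hs).mpr hw⟩
    refine ⟨p, hp, ?_⟩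
    have hk := key_eq G S c p hp hSfree
    rw [Finset.sum_congr rfl (fun s hs => by rw [hXeq s hs, (hG s hs).2.2])] at hk
    linarith
  · rintro v ⟨p, hp, rfl⟩
    have hk := key_eq G S c p hp hSfree
    have hle : ∑ s ∈ S, κ s ≤ ∑ s ∈ S, cutCap G c (labelCut S p s) :=
      Finset.sum_le_sum fun s hs => (hκ s hs).2 ⟨labelCut S p s,
        Finset.mem_insert_self _ _,
        fun t ht hm => by
          rcases mem_labelCut.mp hm with rfl | ⟨htS, _⟩
          · rfl
          · exact absurd ht htS, rfl⟩
    rw [hk] at hle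
    linarith
end
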